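/- arXiv:1612.03553 — 3 statements merged into one kernel-verified Lean document; each statement's English description precedes it below -/
import Mathlib

section
/- For every ν ∈ ℂ and every m ∈ ℕ one has (−1)^m · (1/2 − ν)_m · (1/2 + ν)_m / m! = (1 − ν)_{2m} / m! + ∑_{r=1}^{2m} (−1)^r · (2m+2r)! / (4^r · (m+r)! · r!) · ∑_{α=0}^{2m−r} C(2m−α−1, r−1) · (1 − ν)_α / α!, where C(a,b) denotes the binomial coefficient a choose b. -/
noncomputable def P (x : ℂ) (n : ℕ) : ℂ := ∏ i ∈ Finset.range n, (x + i)

lemma P_zero (x : ℂ) : P x 0 = 1 := by simp [P]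

lemma P_succ_right (x : ℂ) (n : ℕ) : P x (n+1) = P x n * (x + n) :=
  Finset.prod_range_succ _ _

lemma P_succ_left (x : ℂ) (n : ℕ) : P x (n+1) = x * P (x+1) n := by
  rw [P, Finset.prod_range_succ']
  simp only [Nat.cast_zero, add_zero, mul_comm]
  congr 1
  apply Finset.prod_congr rfl
  intro i _
  push_cast
  ring

lemma P_add (x : ℂ) (a b : ℕ) : P x (a+b) = P x a * P (x+a) b := by
  rw [P, Finset.prod_range_add]
  congr 1
  apply Finset.prod_congr rfl
  intro i _
  push_cast
  ring

lemma P_nat (a b : ℕ) : P ((a:ℂ)+1) b * (a.factorial : ℂ) = ((a+b).factorial : ℂ) := by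
  induction b with
  | zero => simp [P]
  | succ b ih =>
    rw [P_succ_right]
    have : a + (b+1) = (a+b) + 1 := by ring
    rw [this, Nat.factorial_succ]
    push_cast
    linear_combination ((a:ℂ) + 1 + (b:ℂ)) * ih

lemma L1 (x y : ℂ) (n : ℕ) :
    P (x+y) n = ∑ k ∈ Finset.range (n+1), (n.choose k : ℂ) * P x k * P y (n-k) := by
  induction n with
  | zero => simp [P]
  | succ n ih =>
    rw [P_succ_right, ih, Finset.sum_mul]
    have hsplit : ∀ k ∈ Finset.range (n+1),
        (n.choose k : ℂ) * P x k * P y (n-k) * (x + y + n)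
          = (n.choose k : ℂ) * P x (k+1) * P y (n-k)
            + (n.choose k : ℂ) * P x k * P y (n-k+1) := by
      intro k hk
      rw [Finset.mem_range] at hk
      have hk' : k ≤ n := Nat.lt_succ_iff.mp hk
      rw [P_succ_right, P_succ_right]
      have hc : ((n-k : ℕ) : ℂ) = (n:ℂ) - k := by
        rw [Nat.cast_sub hk']
      rw [hc]
      ring
    rw [Finset.sum_congr rfl hsplit, Finset.sum_add_distrib]
    -- target sum
    rw [Finset.sum_range_succ' (fun k => ((n+1).choose k : ℂ) * P x k * P y (n+1-k)) (n+1)]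
    have hpascal : ∀ k ∈ Finset.range (n+1),
        (((n+1).choose (k+1) : ℕ) : ℂ) * P x (k+1) * P y (n+1-(k+1))
          = (n.choose k : ℂ) * P x (k+1) * P y (n-k)
            + (n.choose (k+1) : ℂ) * P x (k+1) * P y (n-k) := by
      intro k hk
      have : (n+1).choose (k+1) = n.choose k + n.choose (k+1) := Nat.choose_succ_succ' n k
      rw [this]
      have : n+1-(k+1) = n-k := by omega
      rw [this]
      push_cast
      ring
    rw [Finset.sum_congr rfl hpascal, Finset.sum_add_distrib]
    have hrest : ∑ k ∈ Finset.range (n+1), (n.choose (k+1) : ℂ) * P x (k+1) * P y (n-k)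
          + ((n+1).choose 0 : ℂ) * P x 0 * P y (n+1-0)
        = ∑ k ∈ Finset.range (n+1), (n.choose k : ℂ) * P x k * P y (n-k+1) := by
      have h1 : ∑ k ∈ Finset.range (n+2), (n.choose k : ℂ) * P x k * P y (n+1-k)
          = ∑ k ∈ Finset.range (n+1), (n.choose (k+1) : ℂ) * P x (k+1) * P y (n+1-(k+1))
            + (n.choose 0 : ℂ) * P x 0 * P y (n+1-0) :=
        Finset.sum_range_succ' _ (n+1)
      have h2 : ∑ k ∈ Finset.range (n+2), (n.choose k : ℂ) * P x k * P y (n+1-k)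
          = ∑ k ∈ Finset.range (n+1), (n.choose k : ℂ) * P x k * P y (n+1-k)
            + (n.choose (n+1) : ℂ) * P x (n+1) * P y (n+1-(n+1)) :=
        Finset.sum_range_succ _ (n+1)
      have h3 : ∀ k ∈ Finset.range (n+1), (n.choose k : ℂ) * P x k * P y (n+1-k)
          = (n.choose k : ℂ) * P x k * P y (n-k+1) := by
        intro k hk
        rw [Finset.mem_range] at hk
        have : n+1-k = n-k+1 := by omega
        rw [this]
      simp only [Nat.choose_succ_self, Nat.cast_zero, zero_mul, add_zero] at h2
      rw [Finset.sum_congr rfl h3] at h2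
      have h4 : ∀ k ∈ Finset.range (n+1), (n.choose (k+1) : ℂ) * P x (k+1) * P y (n+1-(k+1))
          = (n.choose (k+1) : ℂ) * P x (k+1) * P y (n-k) := by
        intro k hk
        have : n+1-(k+1) = n-k := by omega
        rw [this]
      rw [Finset.sum_congr rfl h4] at h1
      rw [← h2, h1]
      simp [P_zero]
    rw [← hrest]
    ring

lemma L2 (n : ℕ) : ∀ b c : ℂ,
    ∑ s ∈ Finset.range (n+1), (-1)^s * (n.choose s : ℂ) * P b s * P (c+s) (n-s)
      = P (c-b) n := by
  induction n with
  | zero => intro b c; simp [P]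
  | succ n ih =>
    intro b c
    rw [Finset.sum_range_succ' (fun s => (-1)^s * ((n+1).choose s : ℂ) * P b s * P (c+s) (n+1-s)) (n+1)]
    have hpascal : ∀ s ∈ Finset.range (n+1),
        (-1)^(s+1) * (((n+1).choose (s+1) : ℕ) : ℂ) * P b (s+1) * P (c+(s+1:ℕ)) (n+1-(s+1))
          = (-1)^(s+1) * (n.choose s : ℂ) * P b (s+1) * P (c+(s+1:ℕ)) (n-s)
            + (-1)^(s+1) * (n.choose (s+1) : ℂ) * P b (s+1) * P (c+(s+1:ℕ)) (n-s) := by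
      intro s hk
      rw [Nat.choose_succ_succ' n s]
      have : n+1-(s+1) = n-s := by omega
      rw [this]
      push_cast
      ring
    rw [Finset.sum_congr rfl hpascal, Finset.sum_add_distrib]
    have hsum1 : ∑ s ∈ Finset.range (n+1),
        (-1)^(s+1) * (n.choose s : ℂ) * P b (s+1) * P (c+(s+1:ℕ)) (n-s)
          = -b * P (c-b) n := by
      have hcb : c - b = (c+1) - (b+1) := by ring
      rw [hcb, ← ih (b+1) (c+1), Finset.mul_sum]
      apply Finset.sum_congr rfl
      intro s _
      rw [P_succ_left b s]
      have : c + ((s:ℕ)+1 : ℕ) = (c+1) + (s:ℂ) := by push_cast; ring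
      rw [this]
      push_cast
      ring
    have hsum2 : ∑ s ∈ Finset.range (n+1),
        (-1)^(s+1) * (n.choose (s+1) : ℂ) * P b (s+1) * P (c+(s+1:ℕ)) (n-s)
          + (-1)^0 * (((n+1).choose 0 : ℕ) : ℂ) * P b 0 * P (c+(0:ℕ)) (n+1-0)
          = (c + n) * P (c-b) n := by
      have h1 : ∑ s ∈ Finset.range (n+2), (-1)^s * (n.choose s : ℂ) * P b s * P (c+(s:ℕ)) (n+1-s)
          = ∑ s ∈ Finset.range (n+1), (-1)^(s+1) * (n.choose (s+1) : ℂ) * P b (s+1) * P (c+(s+1:ℕ)) (n+1-(s+1))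
            + (-1)^0 * (n.choose 0 : ℂ) * P b 0 * P (c+(0:ℕ)) (n+1-0) :=
        Finset.sum_range_succ' _ (n+1)
      have h2 : ∑ s ∈ Finset.range (n+2), (-1)^s * (n.choose s : ℂ) * P b s * P (c+(s:ℕ)) (n+1-s)
          = ∑ s ∈ Finset.range (n+1), (-1)^s * (n.choose s : ℂ) * P b s * P (c+(s:ℕ)) (n+1-s)
            + (-1)^(n+1) * (n.choose (n+1) : ℂ) * P b (n+1) * P (c+(n+1:ℕ)) (n+1-(n+1)) :=
        Finset.sum_range_succ _ (n+1)
      have h3 : ∀ s ∈ Finset.range (n+1), (-1)^s * (n.choose s : ℂ) * P b s * P (c+(s:ℕ)) (n+1-s)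
          = (c+n) * ((-1)^s * (n.choose s : ℂ) * P b s * P (c+(s:ℕ)) (n-s)) := by
        intro s hk
        rw [Finset.mem_range] at hk
        have hs : s ≤ n := Nat.lt_succ_iff.mp hk
        have he : n+1-s = (n-s)+1 := by omega
        rw [he, P_succ_right]
        have : ((n-s : ℕ) : ℂ) = (n:ℂ) - s := by rw [Nat.cast_sub hs]
        rw [this]
        ring
      simp only [Nat.choose_succ_self, Nat.cast_zero, zero_mul, mul_zero, add_zero] at h2
      rw [Finset.sum_congr rfl h3, ← Finset.mul_sum, ih b c] at h2
      have h4 : ∀ s ∈ Finset.range (n+1),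
          (-1)^(s+1) * (n.choose (s+1) : ℂ) * P b (s+1) * P (c+(s+1:ℕ)) (n+1-(s+1))
          = (-1)^(s+1) * (n.choose (s+1) : ℂ) * P b (s+1) * P (c+(s+1:ℕ)) (n-s) := by
        intro s hk
        have : n+1-(s+1) = n-s := by omega
        rw [this]
      rw [Finset.sum_congr rfl h4] at h1
      rw [← h2, h1]
      simp
    rw [hsum1, add_assoc, hsum2, P_succ_right]
    ring

lemma L3 (m r : ℕ) : ((2*m+2*r).factorial : ℂ) * (m.factorial : ℂ)
    = ((2*m).factorial : ℂ) * P ((m:ℂ)+1/2) r * 4^r * ((m+r).factorial : ℂ) := by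
  induction r with
  | zero => simp [P]
  | succ r ih =>
    have h1 : 2*m+2*(r+1) = (2*m+2*r+1)+1 := by ring
    have h2 : m+(r+1) = (m+r)+1 := by ring
    rw [h1, h2, Nat.factorial_succ, Nat.factorial_succ, Nat.factorial_succ, P_succ_right, pow_succ]
    push_cast
    linear_combination (((2*m:ℂ)+2*r+1)*((2*m:ℂ)+2*r+2)) * ih

lemma K (m n : ℕ) :
    ∑ r ∈ Finset.Icc 1 (n+1), (-1)^r * ((2*m+2*r).factorial : ℂ) /
        ((4:ℂ)^r * ((m+r).factorial : ℂ) * (r.factorial : ℂ)) * ((n.choose (r-1) : ℕ) : ℂ)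
      = ((2*m).factorial : ℂ) / ((m.factorial : ℂ) * (((n+1).factorial : ℕ) : ℂ)) *
          P (-(m:ℂ)-1/2) (n+1) := by
  rw [← Finset.Ico_add_one_right_eq_Icc, Finset.sum_Ico_eq_sum_range]
  have hr : n + 1 + 1 - 1 = n + 1 := by omega
  rw [hr]
  have key := L2 n ((m:ℂ)+3/2) 2
  have hhalf : (2 : ℂ) - ((m:ℂ)+3/2) = 1/2 - (m:ℂ) := by ring
  rw [hhalf] at key
  have hterm : ∀ s ∈ Finset.range (n+1),
      (-1)^(1+s) * ((2*m+2*(1+s)).factorial : ℂ) /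
          ((4:ℂ)^(1+s) * ((m+(1+s)).factorial : ℂ) * (((1+s).factorial : ℕ) : ℂ)) *
        ((n.choose ((1+s)-1) : ℕ) : ℂ)
      = (-((2*m).factorial : ℂ) * ((m:ℂ)+1/2) /
          ((m.factorial : ℂ) * (((n+1).factorial : ℕ):ℂ))) *
        ((-1)^s * (n.choose s : ℂ) * P ((m:ℂ)+3/2) s * P (2+(s:ℂ)) (n-s)) := by
    intro s hs
    rw [Finset.mem_range] at hs
    have hsn : s ≤ n := Nat.lt_succ_iff.mp hs
    have h1s : 1 + s = s + 1 := by omega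
    rw [h1s]
    have h1s' : s + 1 - 1 = s := by omega
    rw [h1s']
    have hA := L3 m (s+1)
    have hP : P ((m:ℂ)+1/2) (s+1) = ((m:ℂ)+1/2) * P ((m:ℂ)+3/2) s := by
      rw [P_succ_left]
      have : (m:ℂ)+1/2+1 = (m:ℂ)+3/2 := by ring
      rw [this]
    rw [hP] at hA
    have hC := P_nat (s+1) (n-s)
    have hb : (((s+1:ℕ)) : ℂ) + 1 = 2 + (s:ℂ) := by push_cast; ring
    rw [hb] at hC
    have hi : (s+1) + (n-s) = n+1 := by omega
    rw [hi] at hC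
    rw [show m+(s+1) = m+s+1 from by omega] at hA ⊢
    set p1 := P ((m:ℂ)+3/2) s with hp1
    set p2 := P (2+(s:ℂ)) (n-s) with hp2
    have f1 : (m.factorial : ℂ) ≠ 0 := Nat.cast_ne_zero.mpr (Nat.factorial_ne_zero m)
    have f2 : ((m+s+1).factorial : ℂ) ≠ 0 := Nat.cast_ne_zero.mpr (Nat.factorial_ne_zero _)
    have f3 : (((s+1).factorial : ℕ) : ℂ) ≠ 0 := Nat.cast_ne_zero.mpr (Nat.factorial_ne_zero _)
    have f4 : (((n+1).factorial : ℕ) : ℂ) ≠ 0 := Nat.cast_ne_zero.mpr (Nat.factorial_ne_zero _)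
    have f5 : ((4:ℂ))^(s+1) ≠ 0 := pow_ne_zero _ (by norm_num)
    field_simp
    linear_combination (-(2 * (-1)^s * ((n.choose s : ℕ) : ℂ) * (((n+1).factorial : ℕ) : ℂ))) * hA
      + ((-1)^s * ((n.choose s : ℕ) : ℂ) * ((2*m).factorial : ℂ) * p1
          * ((m+s+1).factorial : ℂ) * (4:ℂ)^s * (8*(m:ℂ)+4)) * hC
  rw [Finset.sum_congr rfl hterm, ← Finset.mul_sum, key]
  have hPs : P (-(m:ℂ)-1/2) (n+1) = (-(m:ℂ)-1/2) * P (1/2-(m:ℂ)) n := by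
    rw [P_succ_left]
    have : -(m:ℂ)-1/2+1 = 1/2 - (m:ℂ) := by ring
    rw [this]
  rw [hPs]
  ring

lemma hL_lemma (ν : ℂ) (m : ℕ) :
    (-1)^m * P (1/2 - ν) m * P (1/2 + ν) m
      = ∑ β ∈ Finset.range (2*m+1),
          ((2*m).choose β : ℂ) * P (-(m:ℂ)-1/2) β * P (1-ν) (2*m-β) := by
  rw [← L1]
  have harg : -(m:ℂ)-1/2 + (1-ν) = 1/2 - (m:ℂ) - ν := by ring
  rw [harg]
  have h2m : 2*m = m + m := by ring
  rw [h2m, P_add]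
  have harg2 : 1/2 - (m:ℂ) - ν + (m:ℕ) = 1/2 - ν := by push_cast; ring
  rw [harg2]
  have hneg : P (1/2 - (m:ℂ) - ν) m = (-1)^m * P (1/2 + ν) m := by
    rw [P, P, ← Finset.prod_range_reflect]
    have hc : ∀ i ∈ Finset.range m,
        (1/2 - (m:ℂ) - ν + ((m - 1 - i : ℕ) : ℂ)) = (-1) * (1/2 + ν + i) := by
      intro i hi
      rw [Finset.mem_range] at hi
      have h1 : ((m - 1 - i : ℕ) : ℂ) = (m:ℂ) - 1 - i := by
        have h2 : m - 1 - i = m - (1+i) := by omega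
        rw [h2, Nat.cast_sub (by omega)]
        push_cast
        ring
      rw [h1]
      ring
    rw [Finset.prod_congr rfl hc, Finset.prod_mul_distrib, Finset.prod_const,
      Finset.card_range]
  rw [hneg]
  ring

lemma main_lemma (ν : ℂ) (m : ℕ) :
    (-1) ^ m * P (1/2 - ν) m * P (1/2 + ν) m / (m.factorial : ℂ) =
      P (1 - ν) (2*m) / (m.factorial : ℂ) +
        ∑ r ∈ Finset.Icc 1 (2*m),
          (-1) ^ r * ((2 * m + 2 * r).factorial : ℂ) /
              ((4 : ℂ) ^ r * ((m + r).factorial : ℂ) * (r.factorial : ℂ)) *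
            ∑ α ∈ Finset.range (2 * m - r + 1),
              ((2 * m - α - 1).choose (r - 1) : ℂ) * P (1-ν) α / (α.factorial : ℂ) := by
  -- abbreviations
  set Cr : ℕ → ℂ := fun r => (-1) ^ r * ((2 * m + 2 * r).factorial : ℂ) /
      ((4 : ℂ) ^ r * ((m + r).factorial : ℂ) * (r.factorial : ℂ)) with hCr
  set f : ℕ → ℂ := fun β =>
      ((2*m).choose β : ℂ) * P (-(m:ℂ)-1/2) β * P (1-ν) (2*m-β) / (m.factorial : ℂ)
    with hf
  -- step 1: inner sum reindex
  have hD : ∀ r ∈ Finset.Icc 1 (2*m),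
      (∑ α ∈ Finset.range (2*m - r + 1),
          ((2*m - α - 1).choose (r-1) : ℂ) * P (1-ν) α / (α.factorial : ℂ))
      = ∑ β ∈ Finset.Icc 1 (2*m), (if r ≤ β then
            ((β-1).choose (r-1) : ℂ) * P (1-ν) (2*m-β) / (((2*m-β).factorial : ℕ) : ℂ)
          else 0) := by
    intro r hr
    rw [Finset.mem_Icc] at hr
    have step1 : (∑ α ∈ Finset.range (2*m - r + 1),
          ((2*m - α - 1).choose (r-1) : ℂ) * P (1-ν) α / (α.factorial : ℂ))
        = ∑ β ∈ Finset.Icc r (2*m),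
            ((β-1).choose (r-1) : ℂ) * P (1-ν) (2*m-β) / (((2*m-β).factorial : ℕ) : ℂ) := by
      apply Finset.sum_nbij' (fun α => 2*m - α) (fun β => 2*m - β)
      · intro a ha; rw [Finset.mem_range] at ha; rw [Finset.mem_Icc]; omega
      · intro a ha; rw [Finset.mem_Icc] at ha; rw [Finset.mem_range]; omega
      · intro a ha; rw [Finset.mem_range] at ha; omega
      · intro a ha; rw [Finset.mem_Icc] at ha; omega
      · intro a ha; rw [Finset.mem_range] at ha
        have h1 : 2*m - (2*m - a) = a := by omega
        rw [h1]
    rw [step1]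
    have hset : Finset.Icc r (2*m) = (Finset.Icc 1 (2*m)).filter (fun β => r ≤ β) := by
      ext x
      simp only [Finset.mem_Icc, Finset.mem_filter]
      omega
    rw [hset, Finset.sum_filter]
  -- step 2 : swap and evaluate inner sum
  have hmain2 : ∑ r ∈ Finset.Icc 1 (2*m), Cr r *
      ∑ α ∈ Finset.range (2*m - r + 1),
          ((2*m - α - 1).choose (r-1) : ℂ) * P (1-ν) α / (α.factorial : ℂ)
      = ∑ β ∈ Finset.Icc 1 (2*m), f β := by
    rw [Finset.sum_congr rfl (fun r hr => by rw [hD r hr])]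
    have hpush : ∀ r ∈ Finset.Icc 1 (2*m),
        Cr r * ∑ β ∈ Finset.Icc 1 (2*m), (if r ≤ β then
            ((β-1).choose (r-1) : ℂ) * P (1-ν) (2*m-β) / (((2*m-β).factorial : ℕ) : ℂ)
          else 0)
        = ∑ β ∈ Finset.Icc 1 (2*m), (if r ≤ β then
            Cr r * (((β-1).choose (r-1) : ℂ) * P (1-ν) (2*m-β) / (((2*m-β).factorial : ℕ) : ℂ))
          else 0) := by
      intro r hr
      rw [Finset.mul_sum]
      exact Finset.sum_congr rfl (fun β _ => by rw [mul_ite, mul_zero])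
    rw [Finset.sum_congr rfl hpush, Finset.sum_comm]
    apply Finset.sum_congr rfl
    intro β hβ
    rw [Finset.mem_Icc] at hβ
    have hset2 : Finset.Icc 1 β = (Finset.Icc 1 (2*m)).filter (fun r => r ≤ β) := by
      ext x
      simp only [Finset.mem_Icc, Finset.mem_filter]
      omega
    rw [← Finset.sum_filter, ← hset2]
    -- now apply K
    obtain ⟨n, rfl⟩ : ∃ n, β = n+1 := ⟨β-1, by omega⟩
    have hterm : ∀ r ∈ Finset.Icc 1 (n+1),
        Cr r * (((n+1-1).choose (r-1) : ℂ) * P (1-ν) (2*m-(n+1)) / (((2*m-(n+1)).factorial : ℕ) : ℂ))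
        = (Cr r * ((n.choose (r-1) : ℕ) : ℂ)) *
            (P (1-ν) (2*m-(n+1)) / (((2*m-(n+1)).factorial : ℕ) : ℂ)) := by
      intro r _
      have : n+1-1 = n := by omega
      rw [this]
      ring
    rw [Finset.sum_congr rfl hterm, ← Finset.sum_mul, hCr]
    rw [K m n]
    -- final scalar identity
    have hch : (((2*m).choose (n+1) : ℕ) : ℂ) * (((n+1).factorial : ℕ) : ℂ)
        * (((2*m-(n+1)).factorial : ℕ) : ℂ) = (((2*m).factorial : ℕ) : ℂ) := by
      rw [← Nat.cast_mul, ← Nat.cast_mul,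
        Nat.choose_mul_factorial_mul_factorial (by omega : n+1 ≤ 2*m)]
    have f1 : (m.factorial : ℂ) ≠ 0 := Nat.cast_ne_zero.mpr (Nat.factorial_ne_zero m)
    have f2 : (((n+1).factorial : ℕ) : ℂ) ≠ 0 := Nat.cast_ne_zero.mpr (Nat.factorial_ne_zero _)
    have f3 : (((2*m-(n+1)).factorial : ℕ) : ℂ) ≠ 0 := Nat.cast_ne_zero.mpr (Nat.factorial_ne_zero _)
    simp only [hf]
    set q1 := P (-(m:ℂ)-1/2) (n+1) with hq1
    set q2 := P (1-ν) (2*m-(n+1)) with hq2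
    field_simp
    linear_combination (-q1 * q2) * hch
  -- step 3 : assemble
  rw [hL_lemma ν m, Finset.sum_div]
  have hfd : ∀ β ∈ Finset.range (2*m+1),
      ((2*m).choose β : ℂ) * P (-(m:ℂ)-1/2) β * P (1-ν) (2*m-β) / (m.factorial : ℂ) = f β := by
    intro β _
    rw [hf]
  rw [Finset.sum_congr rfl hfd]
  have hs1 : ∑ β ∈ Finset.range (2*m+1), f β
      = (∑ i ∈ Finset.range (2*m), f (i+1)) + f 0 := Finset.sum_range_succ' f (2*m)
  have hs2 : ∑ β ∈ Finset.Icc 1 (2*m), f β = ∑ i ∈ Finset.range (2*m), f (i+1) := by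
    rw [← Finset.Ico_add_one_right_eq_Icc, Finset.sum_Ico_eq_sum_range]
    have : 2*m + 1 - 1 = 2*m := by omega
    rw [this]
    exact Finset.sum_congr rfl (fun i _ => by rw [add_comm])
  have hf0 : f 0 = P (1-ν) (2*m) / (m.factorial : ℂ) := by
    rw [hf]
    simp [P_zero]
  rw [hs1, ← hs2, hf0, hmain2]
  ring

/-- The combinatorial identity
`(-1)^m (1/2-ν)_m (1/2+ν)_m / m! = (1-ν)_{2m}/m!
  + ∑_{r=1}^{2m} (-1)^r (2m+2r)!/(4^r (m+r)! r!) ∑_{α=0}^{2m-r} C(2m-α-1, r-1) (1-ν)_α/α!`,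
where `(a)_k = ∏_{i<k} (a + i)` is the ascending Pochhammer symbol. -/
theorem stmt_16 (ν : ℂ) (m : ℕ) :
    (-1) ^ m * (∏ i ∈ Finset.range m, (1 / 2 - ν + i)) *
        (∏ i ∈ Finset.range m, (1 / 2 + ν + i)) / (m.factorial : ℂ) =
      (∏ i ∈ Finset.range (2 * m), (1 - ν + i)) / (m.factorial : ℂ) +
        ∑ r ∈ Finset.Icc 1 (2 * m),
          (-1) ^ r * ((2 * m + 2 * r).factorial : ℂ) /
              ((4 : ℂ) ^ r * ((m + r).factorial : ℂ) * (r.factorial : ℂ)) *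
            ∑ α ∈ Finset.range (2 * m - r + 1),
              ((2 * m - α - 1).choose (r - 1) : ℂ) *
                (∏ i ∈ Finset.range α, (1 - ν + i)) / (α.factorial : ℂ) := by
  have h := main_lemma ν m
  simpa only [P] using h
end

section
/- Let d ≥ 1, let k = (k_1,…,k_d) ∈ ℤᵈ, let x > 0, let φ ∈ ℝ, and let y_1, …, y_d > 0. Then the series (1/2π) · ∑_{m∈ℤ} e^{imφ} · j_m(x·y_1⋯y_d) · ∏_{l=1}^d j_{k_l+m}(x/y_l) converges absolutely and equals the integral ∫_{[0,2π]^d} exp( i·( 4πx·y_1⋯y_d·cos(θ_1+⋯+θ_d+φ) + ∑_{l=1}^d ( k_l·θ_l + 4πx·y_l^{−1}·cos θ_l ) ) ) dθ_1⋯dθ_d. -/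
open MeasureTheory

/-- `jint m t = ∫_0^{2π} exp(i(mθ + 4πt·cos θ)) dθ = 2π·iᵐ·J_m(4πt)`. -/
noncomputable def jint (m : ℤ) (t : ℝ) : ℂ :=
  ∫ θ in (0 : ℝ)..(2 * Real.pi),
    Complex.exp (Complex.I * (((m : ℝ) * θ + 4 * Real.pi * t * Real.cos θ : ℝ) : ℂ))

open Real

noncomputable def eI (r : ℝ) : ℂ := Complex.exp (Complex.I * (r : ℂ))

lemma eI_add (r s : ℝ) : eI (r + s) = eI r * eI s := by
  simp only [eI, ← Complex.exp_add]; push_cast; ring_nf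

lemma eI_norm (r : ℝ) : ‖eI r‖ = 1 := by
  simp [eI, mul_comm Complex.I, Complex.norm_exp_ofReal_mul_I]

lemma eI_int_two_pi (m : ℤ) : eI (m * (2 * π)) = 1 := by
  rw [eI, show (Complex.I * ((m * (2*π) : ℝ) : ℂ)) = (m : ℂ) * (2 * π * Complex.I) by push_cast; ring]
  exact Complex.exp_int_mul_two_pi_mul_I m

lemma eI_sum {ι : Type*} (s : Finset ι) (f : ι → ℝ) : ∏ i ∈ s, eI (f i) = eI (∑ i ∈ s, f i) := by
  simp only [eI, ← Complex.exp_sum, ← Finset.mul_sum]; push_cast; ring_nf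


lemma jint_eq (m : ℤ) (t : ℝ) :
    jint m t = ∫ θ in (0:ℝ)..(2*π), eI (m * θ + 4 * π * t * Real.cos θ) := rfl

lemma jint_neg (m : ℤ) (t : ℝ) : jint (-m) t = jint m t := by
  have := intervalIntegral.integral_comp_sub_left
    (fun θ => eI (m * θ + 4 * π * t * Real.cos θ)) (2 * π) (a := 0) (b := 2 * π)
  rw [sub_self, sub_zero] at this
  rw [jint_eq, jint_eq, ← this]
  apply intervalIntegral.integral_congr
  intro θ _
  have hc : Real.cos (2 * π - θ) = Real.cos θ := by
    rw [Real.cos_two_pi_sub]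
  simp only [hc]
  have : (m : ℝ) * (2 * π - θ) + 4 * π * t * Real.cos θ
      = (m : ℝ) * (2 * π) + ((-m : ℤ) : ℝ) * θ + 4 * π * t * Real.cos θ := by push_cast; ring
  rw [this, add_assoc, eI_add ((m:ℝ) * (2*π)), eI_int_two_pi, one_mul]

lemma jint_norm_le (m : ℤ) (t : ℝ) : ‖jint m t‖ ≤ 2 * π := by
  rw [jint_eq]
  have := intervalIntegral.norm_integral_le_of_norm_le_const
    (C := 1) (f := fun θ => eI (m * θ + 4 * π * t * Real.cos θ)) (a := 0) (b := 2*π)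
    (fun θ _ => by rw [eI_norm])
  simpa [abs_of_nonneg Real.two_pi_pos.le] using this

lemma eI_sub_neg (θ : ℝ) : eI θ - eI (-θ) = 2 * Real.sin θ * Complex.I := by
  simp only [eI, mul_comm Complex.I, Complex.exp_mul_I]
  push_cast
  simp [Real.cos_neg, Real.sin_neg]
  ring


lemma eI_continuous : Continuous eI := by
  unfold eI; fun_prop

lemma jint_rec (m : ℤ) (t : ℝ) :
    Complex.I * m * jint m t =
      ((4 * π * t : ℝ) : ℂ) / 2 * (jint (m + 1) t - jint (m - 1) t) := by
  set a : ℝ := 4 * π * t with ha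
  set F : ℝ → ℂ := fun θ => eI ((m : ℝ) * θ + a * Real.cos θ) with hF
  have hFd : ∀ θ : ℝ, HasDerivAt F (Complex.I * (((m : ℝ) - a * Real.sin θ : ℝ) : ℂ) * F θ) θ := by
    intro θ
    have h1 : HasDerivAt (fun θ : ℝ => (m : ℝ) * θ + a * Real.cos θ)
        ((m : ℝ) - a * Real.sin θ) θ := by
      have := ((hasDerivAt_id θ).const_mul (m : ℝ)).add ((Real.hasDerivAt_cos θ).const_mul a)
      simpa [mul_comm, sub_eq_add_neg, mul_assoc, Pi.add_def] using this
    have h2 := (h1.ofReal_comp).const_mul Complex.I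
    have h3 := h2.cexp
    simpa [F, eI, mul_comm, mul_left_comm] using h3
  have hcont : Continuous fun θ : ℝ =>
      Complex.I * (((m : ℝ) - a * Real.sin θ : ℝ) : ℂ) * F θ := by
    apply Continuous.mul
    · fun_prop
    · exact eI_continuous.comp (by fun_prop)
  have hftc := intervalIntegral.integral_eq_sub_of_hasDerivAt
    (f := F) (f' := fun θ => Complex.I * (((m : ℝ) - a * Real.sin θ : ℝ) : ℂ) * F θ)
    (a := 0) (b := 2 * π) (fun θ _ => hFd θ) (hcont.intervalIntegrable _ _)
  have hF2π : F (2 * π) = F 0 := by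
    simp only [F, Real.cos_two_pi, Real.cos_zero, mul_zero, zero_add, mul_one]
    rw [eI_add]
    rw [show ((m : ℝ) * (2 * π)) = ((m : ℤ) : ℝ) * (2 * π) by norm_num, eI_int_two_pi, one_mul]
  rw [hF2π, sub_self] at hftc
  have key : ∀ θ : ℝ, Complex.I * (((m : ℝ) - a * Real.sin θ : ℝ) : ℂ) * F θ
      = Complex.I * (m : ℂ) * F θ - (a : ℂ) / 2 *
        (eI (((m + 1 : ℤ) : ℝ) * θ + a * Real.cos θ)
          - eI (((m - 1 : ℤ) : ℝ) * θ + a * Real.cos θ)) := by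
    intro θ
    have epl : ((m + 1 : ℤ) : ℝ) * θ + a * Real.cos θ
        = θ + ((m : ℝ) * θ + a * Real.cos θ) := by push_cast; ring
    have emi : ((m - 1 : ℤ) : ℝ) * θ + a * Real.cos θ
        = -θ + ((m : ℝ) * θ + a * Real.cos θ) := by push_cast; ring
    have hpl : eI (((m + 1 : ℤ) : ℝ) * θ + a * Real.cos θ) = eI θ * F θ := by
      rw [epl, eI_add]
    have hmi : eI (((m - 1 : ℤ) : ℝ) * θ + a * Real.cos θ) = eI (-θ) * F θ := by
      rw [emi, eI_add]
    rw [hpl, hmi, show eI θ * F θ - eI (-θ) * F θ = (eI θ - eI (-θ)) * F θ by ring, eI_sub_neg]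
    push_cast
    ring
  have iF : IntervalIntegrable F volume 0 (2 * π) :=
    ((eI_continuous.comp (by fun_prop)).intervalIntegrable _ _)
  have iG : ∀ n : ℤ, IntervalIntegrable
      (fun θ => eI ((n : ℝ) * θ + a * Real.cos θ)) volume 0 (2 * π) := fun n =>
    ((eI_continuous.comp (by fun_prop)).intervalIntegrable _ _)
  have hre : (∫ θ in (0:ℝ)..(2*π), Complex.I * (((m : ℝ) - a * Real.sin θ : ℝ) : ℂ) * F θ)
      = Complex.I * m * jint m t - (a : ℂ) / 2 * (jint (m+1) t - jint (m-1) t) := by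
    rw [intervalIntegral.integral_congr (g := fun θ => Complex.I * (m : ℂ) * F θ
      - (a : ℂ) / 2 * (eI (((m + 1 : ℤ) : ℝ) * θ + a * Real.cos θ)
        - eI (((m - 1 : ℤ) : ℝ) * θ + a * Real.cos θ))) (fun θ _ => key θ)]
    rw [intervalIntegral.integral_sub ((iF.const_mul _)) (((iG _).sub (iG _)).const_mul _),
      intervalIntegral.integral_const_mul, intervalIntegral.integral_const_mul,
      intervalIntegral.integral_sub (iG _) (iG _)]
    rw [jint_eq m t, jint_eq (m+1) t, jint_eq (m-1) t]
  rw [hre] at hftc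
  have := sub_eq_zero.mp hftc
  linear_combination this

lemma jint_norm_mul_le (m : ℤ) (t : ℝ) :
    |(m : ℝ)| * ‖jint m t‖ ≤ |4 * π * t| / 2 * (‖jint (m + 1) t‖ + ‖jint (m - 1) t‖) := by
  have h := congrArg norm (jint_rec m t)
  simp only [norm_mul, Complex.norm_I, one_mul, norm_div,
    Complex.norm_real, Real.norm_eq_abs, Complex.norm_intCast, Complex.norm_two] at h
  calc |(m : ℝ)| * ‖jint m t‖ = |4 * π * t| / 2 * ‖jint (m+1) t - jint (m-1) t‖ := by
        rw [h, abs_mul, abs_mul]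
    _ ≤ |4 * π * t| / 2 * (‖jint (m + 1) t‖ + ‖jint (m - 1) t‖) := by
        exact mul_le_mul_of_nonneg_left (norm_sub_le _ _) (by positivity)

lemma jint_bound1 (m : ℤ) (t : ℝ) : |(m : ℝ)| * ‖jint m t‖ ≤ |4 * π * t| * (2 * π) := by
  have h1 := jint_norm_mul_le m t
  have h2 := mul_le_mul_of_nonneg_left
    (add_le_add (jint_norm_le (m + 1) t) (jint_norm_le (m - 1) t))
    (by positivity : (0:ℝ) ≤ |4 * π * t| / 2)
  calc |(m : ℝ)| * ‖jint m t‖ ≤ |4 * π * t| / 2 * (2 * π + 2 * π) := le_trans h1 h2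
    _ = |4 * π * t| * (2 * π) := by ring

lemma jint_bound2 (m : ℤ) (t : ℝ) (hm : 2 ≤ |m|) :
    ‖jint m t‖ * (|(m : ℝ)| - 1) ^ 2 ≤ |4 * π * t| ^ 2 * (2 * π) := by
  set A := |4 * π * t| with hA
  set M := |(m : ℝ)| with hM
  set N := M - 1 with hN
  clear_value A M N
  have hM2 : (2 : ℝ) ≤ M := by rw [hM, ← Int.cast_abs]; exact_mod_cast hm
  have hN0 : (0 : ℝ) ≤ N := by simp only [hN]; linarith
  have hA0 : (0 : ℝ) ≤ A := hA ▸ abs_nonneg _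
  have hu : (0 : ℝ) ≤ ‖jint m t‖ := norm_nonneg _
  have hcp : N ≤ |((m + 1 : ℤ) : ℝ)| := by
    have : M ≤ |((m + 1 : ℤ) : ℝ)| + 1 := by
      rw [hM]
      calc |(m : ℝ)| = |(((m + 1 : ℤ) : ℝ)) + (-1)| := by push_cast; ring_nf
        _ ≤ |((m + 1 : ℤ) : ℝ)| + |(-1 : ℝ)| := abs_add_le _ _
        _ = |((m + 1 : ℤ) : ℝ)| + 1 := by simp
    simp only [hN]; linarith
  have hcm : N ≤ |((m - 1 : ℤ) : ℝ)| := by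
    have : M ≤ |((m - 1 : ℤ) : ℝ)| + 1 := by
      rw [hM]
      calc |(m : ℝ)| = |(((m - 1 : ℤ) : ℝ)) + 1| := by push_cast; ring_nf
        _ ≤ |((m - 1 : ℤ) : ℝ)| + |(1 : ℝ)| := abs_add_le _ _
        _ = |((m - 1 : ℤ) : ℝ)| + 1 := by simp
    simp only [hN]; linarith
  have k2 : N * ‖jint (m + 1) t‖ ≤ A * (2 * π) := by
    calc N * ‖jint (m + 1) t‖ ≤ |((m + 1 : ℤ) : ℝ)| * ‖jint (m + 1) t‖ :=
          mul_le_mul_of_nonneg_right hcp (norm_nonneg _)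
      _ ≤ A * (2 * π) := hA ▸ jint_bound1 (m + 1) t
  have k3 : N * ‖jint (m - 1) t‖ ≤ A * (2 * π) := by
    calc N * ‖jint (m - 1) t‖ ≤ |((m - 1 : ℤ) : ℝ)| * ‖jint (m - 1) t‖ :=
          mul_le_mul_of_nonneg_right hcm (norm_nonneg _)
      _ ≤ A * (2 * π) := hA ▸ jint_bound1 (m - 1) t
  have k1 : M * ‖jint m t‖ ≤ A / 2 * (‖jint (m + 1) t‖ + ‖jint (m - 1) t‖) := by
    rw [hA, hM]; exact jint_norm_mul_le m t
  have q1 : ‖jint m t‖ * N ^ 2 ≤ M * ‖jint m t‖ * N := by nlinarith [mul_nonneg hu hN0, hN]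
  have q2 : M * ‖jint m t‖ * N ≤ A / 2 * (‖jint (m+1) t‖ + ‖jint (m-1) t‖) * N :=
    mul_le_mul_of_nonneg_right k1 hN0
  have q3 : A / 2 * (‖jint (m+1) t‖ + ‖jint (m-1) t‖) * N
      = A / 2 * (N * ‖jint (m+1) t‖ + N * ‖jint (m-1) t‖) := by ring
  have q4 : A / 2 * (N * ‖jint (m+1) t‖ + N * ‖jint (m-1) t‖)
      ≤ A / 2 * (A * (2 * π) + A * (2 * π)) := by
    apply mul_le_mul_of_nonneg_left (by linarith) (by linarith)
  calc ‖jint m t‖ * N ^ 2 ≤ A / 2 * (A * (2 * π) + A * (2 * π)) := by linarith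
    _ = A ^ 2 * (2 * π) := by ring

lemma jint_bound_nat (n : ℕ) (t : ℝ) :
    ‖jint ((n : ℤ) + 2) t‖ ≤ (|4 * π * t| ^ 2 * (2 * π)) * (1 / ((n : ℝ) + 1) ^ 2) := by
  have h := jint_bound2 ((n : ℤ) + 2) t
    (by rw [abs_of_nonneg (by omega : (0:ℤ) ≤ (n : ℤ) + 2)]; omega)
  have hcast : |(((n : ℤ) + 2 : ℤ) : ℝ)| - 1 = (n : ℝ) + 1 := by
    rw [abs_of_nonneg (by positivity)]; push_cast; ring
  rw [hcast] at h
  rw [mul_one_div, le_div_iff₀ (by positivity)]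
  exact h

lemma jint_summable (t : ℝ) : Summable (fun m : ℤ => ‖jint m t‖) := by
  have hbase : Summable (fun n : ℕ => 1 / ((n : ℝ) + 1) ^ 2) := by
    have h0 : Summable (fun n : ℕ => 1 / (n : ℝ) ^ 2) := summable_one_div_nat_pow.2 one_lt_two
    have := (summable_nat_add_iff (f := fun n : ℕ => 1 / (n : ℝ) ^ 2) 1).2 h0
    refine this.congr fun n => by push_cast; ring_nf
  have hnat : Summable (fun n : ℕ => ‖jint (n : ℤ) t‖) := by
    rw [← summable_nat_add_iff 2]
    refine Summable.of_nonneg_of_le (fun n => norm_nonneg _) (fun n => ?_)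
      (hbase.mul_left (|4 * π * t| ^ 2 * (2 * π)))
    have := jint_bound_nat n t
    simpa using this
  refine Summable.of_nat_of_neg hnat (hnat.congr fun n => ?_)
  rw [← jint_neg]

lemma coe_toIcoMod' (u : ℝ) :
    ((toIcoMod Real.two_pi_pos 0 u : ℝ) : AddCircle (2 * π)) = (u : AddCircle (2 * π)) := by
  have h := self_sub_toIcoMod Real.two_pi_pos 0 u
  have hm : toIcoMod Real.two_pi_pos 0 u = u - toIcoDiv Real.two_pi_pos 0 u • (2 * π) := by
    linarith [h]
  rw [hm, QuotientAddGroup.mk_sub]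
  have h0 : ((toIcoDiv Real.two_pi_pos 0 u • (2 * π) : ℝ) : AddCircle (2 * π)) = 0 := by
    rw [QuotientAddGroup.eq_zero_iff]
    exact AddSubgroup.zsmul_mem_zmultiples _ _
  rw [h0, sub_zero]

lemma fourier_eval (n : ℤ) (x : ℝ) :
    haveI : Fact (0 < 2 * π) := ⟨Real.two_pi_pos⟩
    (fourier n (x : AddCircle (2 * π)) : ℂ) = eI (n * x) := by
  haveI : Fact (0 < 2 * π) := ⟨Real.two_pi_pos⟩
  rw [fourier_coe_apply, eI]
  congr 1
  have h2π : ((2 * π : ℝ) : ℂ) ≠ 0 := by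
    simp only [ne_eq, Complex.ofReal_eq_zero]
    positivity
  have hpi : ((2:ℂ) * (π:ℝ) : ℂ) ≠ 0 := by
    simp only [ne_eq, mul_eq_zero, Complex.ofReal_eq_zero]
    push_neg
    exact ⟨two_ne_zero, Real.pi_ne_zero⟩
  push_cast
  rw [div_eq_iff hpi]
  ring

lemma jacobi_anger (s t : ℝ) :
    HasSum (fun m : ℤ => (1 / ((2 * π : ℝ) : ℂ)) * jint m s * eI (m * t))
      (eI (4 * π * s * Real.cos t)) := by
  haveI : Fact (0 < 2 * π) := ⟨Real.two_pi_pos⟩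
  set f : ℝ → ℂ := fun u => eI (4 * π * s * Real.cos u) with hf
  have hper : f 0 = f (2 * π) := by simp [hf, Real.cos_two_pi]
  have hcont : ContinuousOn f (Set.Icc 0 (2 * π)) :=
    (eI_continuous.comp (by fun_prop)).continuousOn
  set g : C(AddCircle (2 * π), ℂ) :=
    ⟨AddCircle.liftIco (2 * π) 0 f, AddCircle.liftIco_zero_continuous hper hcont⟩ with hg
  have hg_coe : ∀ u : ℝ, g (u : AddCircle (2 * π)) = f u := by
    intro u
    have h2 := toIcoMod_mem_Ico' Real.two_pi_pos u
    have h1 := coe_toIcoMod' u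
    have : g ((toIcoMod Real.two_pi_pos 0 u : ℝ) : AddCircle (2 * π))
        = f (toIcoMod Real.two_pi_pos 0 u) := by
      show AddCircle.liftIco (2 * π) 0 f _ = _
      exact AddCircle.liftIco_zero_coe_apply h2
    rw [h1] at this
    rw [this]
    have hmod : toIcoMod Real.two_pi_pos 0 u = u - toIcoDiv Real.two_pi_pos 0 u * (2 * π) := by
      have h := self_sub_toIcoMod Real.two_pi_pos 0 u
      rw [zsmul_eq_mul] at h
      linarith [h]
    simp only [hf, hmod, Real.cos_sub_int_mul_two_pi]
  have hcoeff : ∀ n : ℤ, fourierCoeff (⇑g) n = (1 / ((2 * π : ℝ) : ℂ)) * jint n s := by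
    intro n
    rw [fourierCoeff_eq_intervalIntegral (⇑g) n 0]
    have : (∫ x in (0:ℝ)..(0 + 2 * π), (fourier (-n) (x : AddCircle (2*π)) : ℂ) • g (x : AddCircle (2*π)))
        = jint (-n) s := by
      rw [jint_eq, zero_add]
      apply intervalIntegral.integral_congr
      intro x _
      simp only [smul_eq_mul, fourier_eval, hg_coe, hf]
      rw [← eI_add]
    rw [this, jint_neg, Complex.real_smul]
    push_cast
    ring
  have hsum : Summable (fourierCoeff (⇑g)) := by
    apply Summable.of_norm
    apply Summable.congr (((jint_summable s).mul_left (‖(1 / ((2 * π : ℝ) : ℂ))‖)))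
    intro n
    rw [hcoeff n, norm_mul]
  have hps := has_pointwise_sum_fourier_series_of_summable hsum (t : AddCircle (2 * π))
  rw [hg_coe t] at hps
  refine hps.congr_fun fun n => ?_
  rw [hcoeff n, smul_eq_mul, fourier_eval]

/-- Fourier-series expansion of the torus integral `J_k(y; 2πx, φ)`: the series
`(1/2π) ∑_{m∈ℤ} e^{imφ} j_m(x·y_1⋯y_d) ∏_l j_{k_l+m}(x/y_l)` converges
absolutely and equals the integral over `[0,2π]^d` of
`exp(i(4πx·y_1⋯y_d·cos(θ_1+⋯+θ_d+φ) + ∑_l (k_l·θ_l + 4πx·y_l⁻¹·cos θ_l)))`. -/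
theorem stmt_17 (d : ℕ) (hd : 1 ≤ d) (k : Fin d → ℤ) (x : ℝ) (hx : 0 < x)
    (φ : ℝ) (y : Fin d → ℝ) (hy : ∀ l, 0 < y l) :
    Summable (fun m : ℤ => ‖Complex.exp (Complex.I * (((m : ℝ) * φ : ℝ) : ℂ)) *
      jint m (x * ∏ l, y l) * ∏ l, jint (k l + m) (x / y l)‖) ∧
    (1 / (2 * Real.pi) : ℂ) * ∑' m : ℤ, Complex.exp (Complex.I * (((m : ℝ) * φ : ℝ) : ℂ)) *
        jint m (x * ∏ l, y l) * ∏ l, jint (k l + m) (x / y l) =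
      ∫ θ : Fin d → ℝ in Set.pi Set.univ fun _ => Set.Icc (0 : ℝ) (2 * Real.pi),
        Complex.exp (Complex.I *
          ((4 * Real.pi * x * (∏ l, y l) * Real.cos ((∑ l, θ l) + φ) +
            ∑ l, ((k l : ℝ) * θ l + 4 * Real.pi * x * (y l)⁻¹ * Real.cos (θ l)) : ℝ) : ℂ)) := by
  have h2π : (0:ℝ) < 2 * π := Real.two_pi_pos
  set Y : ℝ := ∏ l, y l with hYdef
  set s : ℝ := x * Y with hsdef
  set box : Set (Fin d → ℝ) := Set.pi Set.univ fun _ => Set.Icc (0 : ℝ) (2 * π) with hbox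
  have hbox_meas : MeasurableSet box := MeasurableSet.univ_pi fun _ => measurableSet_Icc
  have hbox_cpt : IsCompact box := isCompact_univ_pi fun _ => isCompact_Icc
  -- the summand functions
  set G : ℤ → Fin d → ℝ → ℂ :=
    fun m l u => eI (((k l + m : ℤ) : ℝ) * u + 4 * π * (x / y l) * Real.cos u) with hG
  set F : ℤ → (Fin d → ℝ) → ℂ :=
    fun m θ => ((1 / ((2 * π : ℝ) : ℂ)) * jint m s * eI ((m : ℝ) * φ)) *
      ∏ l, G m l (θ l) with hF
  -- Summability (first conjunct)
  have habs : ∀ m : ℤ,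
      ‖eI ((m:ℝ) * φ) * jint m s * ∏ l, jint (k l + m) (x / y l)‖
        ≤ ‖jint m s‖ * (2 * π) ^ d := by
    intro m
    have : ‖eI ((m:ℝ) * φ) * jint m s * ∏ l, jint (k l + m) (x / y l)‖
        = ‖jint m s‖ * ‖∏ l, jint (k l + m) (x / y l)‖ := by
      simp only [norm_mul, eI_norm, one_mul]
    rw [this]
    apply mul_le_mul_of_nonneg_left ?_ (norm_nonneg _)
    calc ‖∏ l, jint (k l + m) (x / y l)‖ = ∏ l, ‖jint (k l + m) (x / y l)‖ := norm_prod _ _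
      _ ≤ ∏ _l : Fin d, (2 * π) := Finset.prod_le_prod (fun _ _ => norm_nonneg _)
          (fun l _ => jint_norm_le _ _)
      _ = (2 * π) ^ d := by rw [Finset.prod_const, Finset.card_univ, Fintype.card_fin]
  have hsum1 : Summable (fun m : ℤ =>
      ‖eI ((m:ℝ) * φ) * jint m s * ∏ l, jint (k l + m) (x / y l)‖) := by
    refine Summable.of_nonneg_of_le (fun m => norm_nonneg _) (fun m => habs m)
      ((jint_summable s).mul_right ((2 * π) ^ d))
  refine ⟨hsum1, ?_⟩
  -- pointwise expansion of the integrand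
  have hpt : ∀ θ : Fin d → ℝ, HasSum (fun m => F m θ)
      (eI (4 * π * x * Y * Real.cos ((∑ l, θ l) + φ) +
        ∑ l, ((k l : ℝ) * θ l + 4 * π * x * (y l)⁻¹ * Real.cos (θ l)))) := by
    intro θ
    have h := (jacobi_anger s ((∑ l, θ l) + φ)).mul_right
      (eI (∑ l, ((k l : ℝ) * θ l + 4 * π * x * (y l)⁻¹ * Real.cos (θ l))))
    have hval : eI (4 * π * s * Real.cos ((∑ l, θ l) + φ)) *
        eI (∑ l, ((k l : ℝ) * θ l + 4 * π * x * (y l)⁻¹ * Real.cos (θ l)))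
        = eI (4 * π * x * Y * Real.cos ((∑ l, θ l) + φ) +
          ∑ l, ((k l : ℝ) * θ l + 4 * π * x * (y l)⁻¹ * Real.cos (θ l))) := by
      rw [← eI_add]
      congr 1
      rw [hsdef]
      ring
    rw [hval] at h
    refine h.congr_fun fun m => ?_
    -- F m θ = (1/(2π)) * jint m s * eI (m * ((∑ θ) + φ)) * eI (∑ ...)
    rw [hF]
    simp only
    rw [hG]
    simp only
    rw [eI_sum]
    rw [show ((1 / ((2 * π : ℝ) : ℂ)) * jint m s * eI ((m : ℝ) * φ)) *
        eI (∑ l, (((k l + m : ℤ) : ℝ) * θ l + 4 * π * (x / y l) * Real.cos (θ l)))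
        = (1 / ((2 * π : ℝ) : ℂ)) * jint m s *
          (eI ((m : ℝ) * φ) * eI (∑ l, (((k l + m : ℤ) : ℝ) * θ l
            + 4 * π * (x / y l) * Real.cos (θ l)))) by ring]
    rw [← eI_add]
    rw [show (1 / ((2 * π : ℝ) : ℂ)) * jint m s * eI ((m:ℝ) * ((∑ l, θ l) + φ)) *
        eI (∑ l, ((k l : ℝ) * θ l + 4 * π * x * (y l)⁻¹ * Real.cos (θ l)))
        = (1 / ((2 * π : ℝ) : ℂ)) * jint m s *
          (eI ((m:ℝ) * ((∑ l, θ l) + φ)) *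
            eI (∑ l, ((k l : ℝ) * θ l + 4 * π * x * (y l)⁻¹ * Real.cos (θ l)))) by ring]
    rw [← eI_add]
    congr 2
    rw [Finset.sum_congr rfl (fun l _ => show (((k l + m : ℤ) : ℝ) * θ l
          + 4 * π * (x / y l) * Real.cos (θ l))
        = ((k l : ℝ) * θ l + 4 * π * x * (y l)⁻¹ * Real.cos (θ l)) + (m : ℝ) * θ l by
      push_cast; field_simp; ring), Finset.sum_add_distrib, ← Finset.mul_sum]
    ring
  -- continuity and integrability
  have hGc : ∀ m l, Continuous (G m l) := by
    intro m l
    exact eI_continuous.comp (by fun_prop)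
  have hFc : ∀ m, Continuous (F m) := by
    intro m
    refine continuous_const.mul (continuous_finset_prod _ fun l _ => ?_)
    exact (hGc m l).comp (continuous_apply l)
  have hFint : ∀ m : ℤ, Integrable (F m) (volume.restrict box) := fun m =>
    ((hFc m).continuousOn.integrableOn_compact hbox_cpt)
  -- norm of F m is constant
  have hFnorm : ∀ m θ, ‖F m θ‖ = 1 / (2 * π) * ‖jint m s‖ := by
    intro m θ
    rw [hF]
    simp only [norm_mul, eI_norm, mul_one, norm_prod]
    have h1 : ‖(1 / ((2 * π : ℝ) : ℂ))‖ = 1 / (2 * π) := by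
      rw [norm_div, norm_one, Complex.norm_real, Real.norm_of_nonneg h2π.le]
    rw [h1]
    have h2 : ∏ l, ‖G m l (θ l)‖ = 1 := by
      rw [hG]; simp only [eI_norm]; exact Finset.prod_const_one
    rw [h2, mul_one]
  have hIntNorm : ∀ m : ℤ, ∫ θ in box, ‖F m θ‖ =
      (volume box).toReal * (1 / (2 * π) * ‖jint m s‖) := by
    intro m
    rw [show (fun θ => ‖F m θ‖) = fun _ => 1 / (2 * π) * ‖jint m s‖ from funext (hFnorm m)]
    rw [setIntegral_const, smul_eq_mul]; rfl
  have hSumInt : Summable (fun m : ℤ => ∫ θ in box, ‖F m θ‖) := by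
    refine Summable.congr (((jint_summable s).mul_left
      ((volume box).toReal * (1 / (2 * π)))) ) fun m => ?_
    rw [hIntNorm m, mul_assoc]
  have key := hasSum_integral_of_summable_integral_norm (μ := volume.restrict box) hFint hSumInt
  have htsum : (fun θ : Fin d → ℝ => ∑' m, F m θ) = fun θ =>
      eI (4 * π * x * Y * Real.cos ((∑ l, θ l) + φ) +
        ∑ l, ((k l : ℝ) * θ l + 4 * π * x * (y l)⁻¹ * Real.cos (θ l))) :=
    funext fun θ => (hpt θ).tsum_eq
  rw [htsum] at key
  -- evaluate each integral
  have hval : ∀ m : ℤ, (∫ θ in box, F m θ) =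
      ((1 / ((2 * π : ℝ) : ℂ)) * jint m s * eI ((m : ℝ) * φ)) *
        ∏ l, jint (k l + m) (x / y l) := by
    intro m
    rw [hF]
    simp only
    rw [integral_const_mul]
    congr 1
    -- ∫ θ in box, ∏ l, G m l (θ l) = ∏ l, jint (k l + m) (x / y l)
    rw [← integral_indicator hbox_meas]
    have hind : (box.indicator fun θ => ∏ l, G m l (θ l)) =
        fun θ => ∏ l, (Set.Icc (0:ℝ) (2*π)).indicator (G m l) (θ l) := by
      funext θ
      by_cases hθ : θ ∈ box
      · rw [Set.indicator_of_mem hθ]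
        exact Finset.prod_congr rfl fun l _ =>
          (Set.indicator_of_mem (hθ l (Set.mem_univ l)) _).symm
      · rw [Set.indicator_of_notMem hθ]
        rw [hbox, Set.mem_univ_pi] at hθ
        push_neg at hθ
        obtain ⟨l, hl⟩ := hθ
        exact (Finset.prod_eq_zero (Finset.mem_univ l)
          (Set.indicator_of_notMem hl _)).symm
    rw [hind, MeasureTheory.volume_pi]
    simp only [MeasureTheory.integral_fintype_prod_eq_prod
      (fun l u => (Set.Icc (0:ℝ) (2*π)).indicator (G m l) u)]
    refine Finset.prod_congr rfl fun l _ => ?_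
    rw [integral_indicator measurableSet_Icc, integral_Icc_eq_integral_Ioc,
      jint_eq, intervalIntegral.integral_of_le h2π.le]
  have key2 : HasSum (fun m : ℤ => ((1 / ((2 * π : ℝ) : ℂ)) * jint m s * eI ((m : ℝ) * φ)) *
      ∏ l, jint (k l + m) (x / y l))
      (∫ θ in box, eI (4 * π * x * Y * Real.cos ((∑ l, θ l) + φ) +
        ∑ l, ((k l : ℝ) * θ l + 4 * π * x * (y l)⁻¹ * Real.cos (θ l)))) := by
    refine HasSum.congr_fun key fun m => (hval m).symm
  have goalrhs : (∫ θ : Fin d → ℝ in box,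
      Complex.exp (Complex.I *
        ((4 * Real.pi * x * Y * Real.cos ((∑ l, θ l) + φ) +
          ∑ l, ((k l : ℝ) * θ l + 4 * Real.pi * x * (y l)⁻¹ * Real.cos (θ l)) : ℝ) : ℂ)))
      = ∫ θ in box, eI (4 * π * x * Y * Real.cos ((∑ l, θ l) + φ) +
        ∑ l, ((k l : ℝ) * θ l + 4 * π * x * (y l)⁻¹ * Real.cos (θ l))) := rfl
  rw [goalrhs, ← key2.tsum_eq, ← tsum_mul_left]
  refine tsum_congr fun m => ?_
  show (1 / (2 * (π:ℂ))) * (eI ((m:ℝ) * φ) * jint m s * ∏ l, jint (k l + m) (x / y l)) = _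
  have : (1 / (2 * (π:ℂ))) = (1 / ((2 * π : ℝ) : ℂ)) := by push_cast; ring
  rw [this]
  ring
end

section
/- Let d ≥ 1, let m = (m_1,…,m_{d+1}) ∈ ℤ^{d+1}, let x > 0, and let ν = (ν_1,…,ν_d) ∈ ℂᵈ. Suppose there exists a real number a with −1/2 ≤ a ≤ |m_{d+1}| such that −(1/2 + a)/2 < Re ν_l < (|m_l| − a)/2 for all 1 ≤ l ≤ d. Then the function (y_1,…,y_d) ↦ j_{m_{d+1}}(x·y_1⋯y_d) · ∏_{l=1}^d y_l^{2ν_l−1} · j_{m_l}(x/y_l) is Lebesgue integrable on (0,∞)^d, where y^{2ν−1} = exp((2ν−1)·log y) for y > 0. -/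
open MeasureTheory

open intervalIntegral Set

lemma norm_exp_I_mul_real (r : ℝ) : ‖Complex.exp (Complex.I * r)‖ = 1 := by
  rw [Complex.norm_exp]
  simp

lemma norm_I_mul_real (r : ℝ) : ‖Complex.I * r‖ = |r| := by
  rw [norm_mul, Complex.norm_I, one_mul, Complex.norm_real, Real.norm_eq_abs]

/-- Van der Corput first-derivative estimate. -/
lemma vdc1 {a b lam : ℝ} {f f' f'' : ℝ → ℝ}
    (hab : a ≤ b) (hlam : 0 < lam)
    (hf : ∀ θ, HasDerivAt f (f' θ) θ)
    (hf' : ∀ θ, HasDerivAt f' (f'' θ) θ)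
    (hcont : Continuous f'')
    (hsign : (∀ θ ∈ Set.Icc a b, lam ≤ f' θ) ∨ (∀ θ ∈ Set.Icc a b, f' θ ≤ -lam))
    (hsign2 : (∀ θ ∈ Set.Icc a b, 0 ≤ f'' θ) ∨ (∀ θ ∈ Set.Icc a b, f'' θ ≤ 0)) :
    ‖∫ θ in a..b, Complex.exp (Complex.I * (f θ : ℂ))‖ ≤ 3 / lam := by
  have hcf : Continuous f := by
    rw [continuous_iff_continuousAt]; exact fun θ => (hf θ).continuousAt
  have hcf' : Continuous f' := by
    rw [continuous_iff_continuousAt]; exact fun θ => (hf' θ).continuousAt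
  have habs : ∀ θ ∈ Set.Icc a b, lam ≤ |f' θ| := by
    intro θ hθ
    rcases hsign with h | h
    · exact le_trans (h θ hθ) (le_abs_self _)
    · rw [abs_of_neg (by linarith [h θ hθ])]; linarith [h θ hθ]
  have hne : ∀ θ ∈ Set.Icc a b, f' θ ≠ 0 := by
    intro θ hθ h0
    have := habs θ hθ
    rw [h0] at this; simp at this; linarith
  set F : ℝ → ℂ := fun θ => Complex.exp (Complex.I * f θ) / (Complex.I * f' θ) with hF
  set G : ℝ → ℂ := fun θ =>
    Complex.exp (Complex.I * f θ) * (Complex.I * f'' θ) / ((f' θ : ℂ)) ^ 2 with hG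
  have hD : ∀ θ ∈ Set.Icc a b,
      HasDerivAt F (Complex.exp (Complex.I * f θ) + G θ) θ := by
    intro θ hθ
    have hne' : (f' θ : ℂ) ≠ 0 := Complex.ofReal_ne_zero.mpr (hne θ hθ)
    have h0 : Complex.I * (f' θ : ℂ) ≠ 0 := mul_ne_zero Complex.I_ne_zero hne'
    have h1 : HasDerivAt (fun θ : ℝ => Complex.I * (f θ : ℂ)) (Complex.I * f' θ) θ :=
      ((hf θ).ofReal_comp).const_mul Complex.I
    have h2 : HasDerivAt (fun θ : ℝ => Complex.exp (Complex.I * f θ))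
        (Complex.exp (Complex.I * f θ) * (Complex.I * f' θ)) θ := h1.cexp
    have h3 : HasDerivAt (fun θ : ℝ => Complex.I * (f' θ : ℂ)) (Complex.I * f'' θ) θ :=
      ((hf' θ).ofReal_comp).const_mul Complex.I
    have h4 := h2.div h3 h0
    refine h4.congr_deriv (Eq.symm ?_)
    have e1 : Complex.exp (Complex.I * f θ) * (Complex.I * f' θ) * (Complex.I * f' θ)
        = -(Complex.exp (Complex.I * f θ) * ((f' θ : ℂ)) ^ 2) := by
      linear_combination (Complex.exp (Complex.I * (f θ : ℂ)) * ((f' θ : ℂ)) ^ 2) * Complex.I_sq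
    rw [e1, mul_pow, Complex.I_sq]
    field_simp [hne']
    have h5 : ((f' θ : ℂ)) ^ 2 * ((f' θ : ℂ))⁻¹ ^ 2 = 1 := by
      rw [← mul_pow, mul_inv_cancel₀ hne', one_pow]
    linear_combination (Complex.I * Complex.exp (Complex.I * (f θ : ℂ)) * (f'' θ : ℂ)) * h5
  have hIexp : IntervalIntegrable (fun θ => Complex.exp (Complex.I * (f θ : ℂ))) volume a b := by
    apply Continuous.intervalIntegrable
    exact Complex.continuous_exp.comp (continuous_const.mul (Complex.continuous_ofReal.comp hcf))
  have hIG : IntervalIntegrable G volume a b := by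
    apply ContinuousOn.intervalIntegrable
    rw [uIcc_of_le hab]
    apply ContinuousOn.div
    · apply Continuous.continuousOn
      exact (Complex.continuous_exp.comp
        (continuous_const.mul (Complex.continuous_ofReal.comp hcf))).mul
        (continuous_const.mul (Complex.continuous_ofReal.comp hcont))
    · exact ((Complex.continuous_ofReal.comp hcf').pow 2).continuousOn
    · intro θ hθ
      exact pow_ne_zero 2 (Complex.ofReal_ne_zero.mpr (hne θ hθ))
  have key : ∫ θ in a..b, (Complex.exp (Complex.I * (f θ : ℂ)) + G θ) = F b - F a := by
    apply integral_eq_sub_of_hasDerivAt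
    · intro θ hθ
      exact hD θ (by rwa [uIcc_of_le hab] at hθ)
    · exact hIexp.add hIG
  have hsplit : ∫ θ in a..b, Complex.exp (Complex.I * (f θ : ℂ))
      = F b - F a - ∫ θ in a..b, G θ := by
    rw [← key, integral_add hIexp hIG]; ring
  have hFle : ∀ θ ∈ Set.Icc a b, ‖F θ‖ ≤ 1 / lam := by
    intro θ hθ
    rw [hF]
    simp only [norm_div, norm_exp_I_mul_real, norm_I_mul_real]
    rw [div_le_div_iff₀ (lt_of_lt_of_le hlam (habs θ hθ)) hlam, one_mul, one_mul]
    exact habs θ hθ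
  -- bound on ∫ G
  have hGnorm : ∀ θ, ‖G θ‖ = |f'' θ| / (f' θ) ^ 2 := by
    intro θ
    rw [hG]
    simp only [norm_div, norm_mul, norm_exp_I_mul_real, norm_I_mul_real, Complex.norm_I, one_mul,
      norm_pow, Complex.norm_real, Real.norm_eq_abs, sq_abs]
  have hIquot : IntervalIntegrable (fun θ => f'' θ / (f' θ) ^ 2) volume a b := by
    apply ContinuousOn.intervalIntegrable
    rw [uIcc_of_le hab]
    exact hcont.continuousOn.div ((hcf'.pow 2).continuousOn)
      (fun θ hθ => pow_ne_zero 2 (hne θ hθ))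
  have hftc2 : ∫ θ in a..b, f'' θ / (f' θ) ^ 2 = (f' a)⁻¹ - (f' b)⁻¹ := by
    have : ∀ θ ∈ uIcc a b, HasDerivAt (fun θ => -(f' θ)⁻¹) (f'' θ / (f' θ) ^ 2) θ := by
      intro θ hθ
      rw [uIcc_of_le hab] at hθ
      have := ((hf' θ).inv (hne θ hθ)).neg
      refine this.congr_deriv ?_
      ring
    rw [integral_eq_sub_of_hasDerivAt this hIquot]
    ring
  have hbnd : (f' a)⁻¹ - (f' b)⁻¹ ≤ 1 / lam ∧ (f' b)⁻¹ - (f' a)⁻¹ ≤ 1 / lam := by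
    have ha' : a ∈ Set.Icc a b := ⟨le_refl a, hab⟩
    have hb' : b ∈ Set.Icc a b := ⟨hab, le_refl b⟩
    rcases hsign with h | h
    · have h1 : 0 < f' a := lt_of_lt_of_le hlam (h a ha')
      have h2 : 0 < f' b := lt_of_lt_of_le hlam (h b hb')
      have h3 : (f' a)⁻¹ ≤ lam⁻¹ := inv_anti₀ hlam (h a ha')
      have h4 : (f' b)⁻¹ ≤ lam⁻¹ := inv_anti₀ hlam (h b hb')
      have h5 : 0 < (f' a)⁻¹ := inv_pos.mpr h1
      have h6 : 0 < (f' b)⁻¹ := inv_pos.mpr h2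
      rw [one_div]
      constructor <;> linarith
    · have h1 : f' a < 0 := by linarith [h a ha']
      have h2 : f' b < 0 := by linarith [h b hb']
      have h3 : lam⁻¹ ≤ -(f' a)⁻¹ ∨ True := Or.inr trivial
      have h5 : (f' a)⁻¹ < 0 := inv_neg''.mpr h1
      have h6 : (f' b)⁻¹ < 0 := inv_neg''.mpr h2
      have h7 : -(f' a)⁻¹ ≤ lam⁻¹ := by
        rw [← inv_neg]
        exact inv_anti₀ hlam (by linarith [h a ha'])
      have h8 : -(f' b)⁻¹ ≤ lam⁻¹ := by
        rw [← inv_neg]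
        exact inv_anti₀ hlam (by linarith [h b hb'])
      rw [one_div]
      constructor <;> linarith
  have hGint : ‖∫ θ in a..b, G θ‖ ≤ 1 / lam := by
    calc ‖∫ θ in a..b, G θ‖ ≤ ∫ θ in a..b, ‖G θ‖ := norm_integral_le_integral_norm hab
    _ ≤ 1 / lam := by
      rcases hsign2 with h | h
      · have heq : Set.EqOn (fun θ => ‖G θ‖) (fun θ => f'' θ / (f' θ) ^ 2) (uIcc a b) := by
          intro θ hθ
          rw [uIcc_of_le hab] at hθ
          simp only [hGnorm θ, abs_of_nonneg (h θ hθ)]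
        rw [integral_congr heq, hftc2]
        exact hbnd.1
      · have heq : Set.EqOn (fun θ => ‖G θ‖) (fun θ => -(f'' θ / (f' θ) ^ 2)) (uIcc a b) := by
          intro θ hθ
          rw [uIcc_of_le hab] at hθ
          simp only [hGnorm θ, abs_of_nonpos (h θ hθ)]
          ring
        rw [integral_congr heq, intervalIntegral.integral_neg, hftc2]
        have := hbnd.2; linarith
  calc ‖∫ θ in a..b, Complex.exp (Complex.I * (f θ : ℂ))‖
      = ‖F b - F a - ∫ θ in a..b, G θ‖ := by rw [hsplit]
    _ ≤ ‖F b - F a‖ + ‖∫ θ in a..b, G θ‖ := norm_sub_le _ _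
    _ ≤ (‖F b‖ + ‖F a‖) + ‖∫ θ in a..b, G θ‖ := by
        gcongr; exact norm_sub_le _ _
    _ ≤ (1 / lam + 1 / lam) + 1 / lam := by
        gcongr
        · exact hFle b ⟨hab, le_refl b⟩
        · exact hFle a ⟨le_refl a, hab⟩
    _ = 3 / lam := by ring

/-- One-sided van der Corput second-derivative estimate. -/
lemma vdc2_aux {a b lam : ℝ} {f f' f'' : ℝ → ℝ}
    (hab : a ≤ b) (hlam : 0 < lam)
    (hf : ∀ θ, HasDerivAt f (f' θ) θ)
    (hf' : ∀ θ, HasDerivAt f' (f'' θ) θ)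
    (hcont : Continuous f'')
    (hconv : ∀ θ ∈ Set.Icc a b, lam ≤ f'' θ)
    (h0 : 0 ≤ f' a) :
    ‖∫ θ in a..b, Complex.exp (Complex.I * (f θ : ℂ))‖ ≤ 4 / Real.sqrt lam := by
  have hcf : Continuous f := by
    rw [continuous_iff_continuousAt]; exact fun θ => (hf θ).continuousAt
  have hcf' : Continuous f' := by
    rw [continuous_iff_continuousAt]; exact fun θ => (hf' θ).continuousAt
  have hce : Continuous fun θ : ℝ => Complex.exp (Complex.I * (f θ : ℂ)) :=
    Complex.continuous_exp.comp (continuous_const.mul (Complex.continuous_ofReal.comp hcf))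
  have hsl : 0 < Real.sqrt lam := Real.sqrt_pos.mpr hlam
  set δ : ℝ := (Real.sqrt lam)⁻¹ with hδdef
  have hδ : 0 < δ := inv_pos.mpr hsl
  have hlamδ : lam * δ = Real.sqrt lam := by
    rw [hδdef]
    rw [← Real.mul_self_sqrt hlam.le]
    field_simp
    rw [Real.sqrt_sq hsl.le]
  have hgrow : ∀ θ ∈ Set.Icc a b, f' a + lam * (θ - a) ≤ f' θ := by
    intro θ hθ
    have hg : MonotoneOn (fun θ => f' θ - lam * θ) (Set.Icc a b) := by
      apply monotoneOn_of_deriv_nonneg (convex_Icc a b)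
      · exact (hcf'.sub (continuous_const.mul continuous_id)).continuousOn
      · intro x _
        exact ((hf' x).sub ((hasDerivAt_id x).const_mul lam)).differentiableAt.differentiableWithinAt
      · intro x hx
        rw [interior_Icc] at hx
        have hdd : HasDerivAt (fun θ : ℝ => f' θ - lam * θ) (f'' x - lam * 1) x :=
          (hf' x).sub ((hasDerivAt_id x).const_mul lam)
        rw [hdd.deriv]
        have := hconv x ⟨hx.1.le, hx.2.le⟩
        linarith
    have := hg ⟨le_refl a, hab⟩ hθ hθ.1
    simp only at this
    linarith
  rcases le_or_gt b (a + δ) with hb | hb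
  · have h1 : ‖∫ θ in a..b, Complex.exp (Complex.I * (f θ : ℂ))‖ ≤ 1 * |b - a| :=
      intervalIntegral.norm_integral_le_of_norm_le_const
        (fun x _ => le_of_eq (norm_exp_I_mul_real _))
    rw [one_mul, abs_of_nonneg (by linarith)] at h1
    refine h1.trans ?_
    rw [div_eq_mul_inv]
    have : b - a ≤ δ := by linarith
    refine this.trans ?_
    rw [hδdef]
    nlinarith [inv_pos.mpr hsl]
  · have hmem : a + δ ∈ Set.uIcc a b := by
      rw [uIcc_of_le hab]; exact ⟨by linarith, hb.le⟩
    have II : ∀ u v : ℝ, IntervalIntegrable (fun θ => Complex.exp (Complex.I * (f θ : ℂ))) volume u v :=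
      fun u v => hce.intervalIntegrable u v
    rw [← integral_add_adjacent_intervals (II a (a + δ)) (II (a + δ) b)]
    have p1 : ‖∫ θ in a..(a + δ), Complex.exp (Complex.I * (f θ : ℂ))‖ ≤ δ := by
      have h1 : ‖∫ θ in a..(a + δ), Complex.exp (Complex.I * (f θ : ℂ))‖ ≤ 1 * |a + δ - a| :=
        intervalIntegral.norm_integral_le_of_norm_le_const
          (fun x _ => le_of_eq (norm_exp_I_mul_real _))
      rw [one_mul] at h1
      refine h1.trans_eq ?_
      rw [add_sub_cancel_left, abs_of_pos hδ]
    have p2 : ‖∫ θ in (a + δ)..b, Complex.exp (Complex.I * (f θ : ℂ))‖ ≤ 3 / Real.sqrt lam := by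
      apply vdc1 hb.le hsl hf hf' hcont
      · left
        intro θ hθ
        have h2 := hgrow θ ⟨by linarith [hθ.1], hθ.2⟩
        have h3 : lam * δ ≤ lam * (θ - a) := by
          apply mul_le_mul_of_nonneg_left ?_ hlam.le
          linarith [hθ.1]
        rw [hlamδ] at h3
        linarith
      · left
        intro θ hθ
        have := hconv θ ⟨by linarith [hθ.1], hθ.2⟩
        linarith
    calc ‖(∫ θ in a..(a + δ), Complex.exp (Complex.I * (f θ : ℂ))) +
          ∫ θ in (a + δ)..b, Complex.exp (Complex.I * (f θ : ℂ))‖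
        ≤ ‖∫ θ in a..(a + δ), Complex.exp (Complex.I * (f θ : ℂ))‖ +
          ‖∫ θ in (a + δ)..b, Complex.exp (Complex.I * (f θ : ℂ))‖ := norm_add_le _ _
      _ ≤ δ + 3 / Real.sqrt lam := add_le_add p1 p2
      _ ≤ 4 / Real.sqrt lam := by
          rw [hδdef, inv_eq_one_div]
          rw [← add_div, div_le_div_iff₀ hsl hsl]
          nlinarith

/-- One-sided reflected version. -/
lemma vdc2_aux' {a b lam : ℝ} {f f' f'' : ℝ → ℝ}
    (hab : a ≤ b) (hlam : 0 < lam)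
    (hf : ∀ θ, HasDerivAt f (f' θ) θ)
    (hf' : ∀ θ, HasDerivAt f' (f'' θ) θ)
    (hcont : Continuous f'')
    (hconv : ∀ θ ∈ Set.Icc a b, lam ≤ f'' θ)
    (h0 : f' b ≤ 0) :
    ‖∫ θ in a..b, Complex.exp (Complex.I * (f θ : ℂ))‖ ≤ 4 / Real.sqrt lam := by
  have hg : ∀ θ, HasDerivAt (fun θ => f (a + b - θ)) (-f' (a + b - θ)) θ := by
    intro θ
    have h1 : HasDerivAt (fun θ : ℝ => a + b - θ) (-1) θ := by
      simpa using (hasDerivAt_id θ).const_sub (a + b)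
    have := (hf (a + b - θ)).comp θ h1
    simpa [Function.comp_def] using this
  have hg' : ∀ θ, HasDerivAt (fun θ => -f' (a + b - θ)) (f'' (a + b - θ)) θ := by
    intro θ
    have h1 : HasDerivAt (fun θ : ℝ => a + b - θ) (-1) θ := by
      simpa using (hasDerivAt_id θ).const_sub (a + b)
    have := ((hf' (a + b - θ)).comp θ h1).neg
    simpa [Function.comp_def, Pi.neg_def] using this
  have hgc : Continuous fun θ : ℝ => f'' (a + b - θ) :=
    hcont.comp (by continuity)
  have hconvg : ∀ θ ∈ Set.Icc a b, lam ≤ f'' (a + b - θ) := fun θ hθ =>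
    hconv _ ⟨by linarith [hθ.2], by linarith [hθ.1]⟩
  have h0g : 0 ≤ -f' (a + b - a) := by
    simp only [add_sub_cancel_left]
    linarith
  have hmain := vdc2_aux hab hlam hg hg' hgc hconvg h0g
  have hrefl : (∫ θ in a..b, Complex.exp (Complex.I * (f (a + b - θ) : ℂ)))
      = ∫ θ in a..b, Complex.exp (Complex.I * (f θ : ℂ)) := by
    have := intervalIntegral.integral_comp_sub_left
      (fun x => Complex.exp (Complex.I * (f x : ℂ))) (a + b) (a := a) (b := b)
    simpa using this
  rwa [hrefl] at hmain

/-- Van der Corput second-derivative estimate. -/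
lemma vdc2 {a b lam : ℝ} {f f' f'' : ℝ → ℝ}
    (hab : a ≤ b) (hlam : 0 < lam)
    (hf : ∀ θ, HasDerivAt f (f' θ) θ)
    (hf' : ∀ θ, HasDerivAt f' (f'' θ) θ)
    (hcont : Continuous f'')
    (hconv : ∀ θ ∈ Set.Icc a b, lam ≤ f'' θ) :
    ‖∫ θ in a..b, Complex.exp (Complex.I * (f θ : ℂ))‖ ≤ 8 / Real.sqrt lam := by
  have hcf : Continuous f := by
    rw [continuous_iff_continuousAt]; exact fun θ => (hf θ).continuousAt
  have hcf' : Continuous f' := by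
    rw [continuous_iff_continuousAt]; exact fun θ => (hf' θ).continuousAt
  have hce : Continuous fun θ : ℝ => Complex.exp (Complex.I * (f θ : ℂ)) :=
    Complex.continuous_exp.comp (continuous_const.mul (Complex.continuous_ofReal.comp hcf))
  have hsl : 0 < Real.sqrt lam := Real.sqrt_pos.mpr hlam
  have h48 : (4 : ℝ) / Real.sqrt lam ≤ 8 / Real.sqrt lam := by
    gcongr <;> norm_num
  rcases le_or_gt 0 (f' a) with h | h
  · exact (vdc2_aux hab hlam hf hf' hcont hconv h).trans h48
  · rcases le_or_gt (f' b) 0 with h2 | h2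
    · exact (vdc2_aux' hab hlam hf hf' hcont hconv h2).trans h48
    · obtain ⟨c, hc, hfc⟩ : ∃ c ∈ Set.Icc a b, f' c = 0 := by
        have hsub := intermediate_value_Icc hab hcf'.continuousOn
        have : (0 : ℝ) ∈ Set.Icc (f' a) (f' b) := ⟨h.le, h2.le⟩
        obtain ⟨c, hc, hfc⟩ := hsub this
        exact ⟨c, hc, hfc⟩
      have II : ∀ u v : ℝ,
          IntervalIntegrable (fun θ => Complex.exp (Complex.I * (f θ : ℂ))) volume u v :=
        fun u v => hce.intervalIntegrable u v
      rw [← integral_add_adjacent_intervals (II a c) (II c b)]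
      have p1 : ‖∫ θ in a..c, Complex.exp (Complex.I * (f θ : ℂ))‖ ≤ 4 / Real.sqrt lam := by
        apply vdc2_aux' hc.1 hlam hf hf' hcont
          (fun θ hθ => hconv θ ⟨hθ.1, hθ.2.trans hc.2⟩) (le_of_eq hfc)
      have p2 : ‖∫ θ in c..b, Complex.exp (Complex.I * (f θ : ℂ))‖ ≤ 4 / Real.sqrt lam := by
        apply vdc2_aux hc.2 hlam hf hf' hcont
          (fun θ hθ => hconv θ ⟨hc.1.trans hθ.1, hθ.2⟩) (ge_of_eq hfc)
      calc ‖(∫ θ in a..c, Complex.exp (Complex.I * (f θ : ℂ))) +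
            ∫ θ in c..b, Complex.exp (Complex.I * (f θ : ℂ))‖
          ≤ ‖∫ θ in a..c, Complex.exp (Complex.I * (f θ : ℂ))‖ +
            ‖∫ θ in c..b, Complex.exp (Complex.I * (f θ : ℂ))‖ := norm_add_le _ _
        _ ≤ 4 / Real.sqrt lam + 4 / Real.sqrt lam := add_le_add p1 p2
        _ = 8 / Real.sqrt lam := by ring

lemma my_intervalIntegral_conj {f : ℝ → ℂ} {a b : ℝ} :
    (∫ x in a..b, (starRingEnd ℂ) (f x)) = (starRingEnd ℂ) (∫ x in a..b, f x) := by
  simp only [intervalIntegral, integral_conj, map_sub]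

/-- vdc2 for concave phases. -/
lemma vdc2_neg {a b lam : ℝ} {f f' f'' : ℝ → ℝ}
    (hab : a ≤ b) (hlam : 0 < lam)
    (hf : ∀ θ, HasDerivAt f (f' θ) θ)
    (hf' : ∀ θ, HasDerivAt f' (f'' θ) θ)
    (hcont : Continuous f'')
    (hconv : ∀ θ ∈ Set.Icc a b, f'' θ ≤ -lam) :
    ‖∫ θ in a..b, Complex.exp (Complex.I * (f θ : ℂ))‖ ≤ 8 / Real.sqrt lam := by
  have hg : ∀ θ, HasDerivAt (fun θ => -f θ) (-f' θ) θ := fun θ => (hf θ).neg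
  have hg' : ∀ θ, HasDerivAt (fun θ => -f' θ) (-f'' θ) θ := fun θ => (hf' θ).neg
  have hgc : Continuous fun θ => -f'' θ := hcont.neg
  have hconvg : ∀ θ ∈ Set.Icc a b, lam ≤ -f'' θ := fun θ hθ => by linarith [hconv θ hθ]
  have hmain := vdc2 hab hlam hg hg' hgc hconvg
  have hconj : ∀ θ : ℝ, Complex.exp (Complex.I * ((-f θ : ℝ) : ℂ))
      = (starRingEnd ℂ) (Complex.exp (Complex.I * (f θ : ℂ))) := by
    intro θ
    rw [← Complex.exp_conj]
    congr 1
    simp only [map_mul, Complex.conj_I, Complex.conj_ofReal, Complex.ofReal_neg]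
    ring
  rw [show (∫ θ in a..b, Complex.exp (Complex.I * ((-f θ : ℝ) : ℂ)))
      = (starRingEnd ℂ) (∫ θ in a..b, Complex.exp (Complex.I * (f θ : ℂ))) from by
    rw [← my_intervalIntegral_conj]; exact intervalIntegral.integral_congr fun θ _ => hconj θ]
    at hmain
  rwa [RCLike.norm_conj] at hmain

set_option maxHeartbeats 2000000 in
/-- Decay of the Bessel-type oscillatory integral. -/
lemma bint_decay (m : ℤ) (z : ℝ) (hz : 4 * Real.pi ≤ z) (hm : 4 * |(m : ℝ)| ≤ z) :
    ‖∫ θ in (0:ℝ)..(2 * Real.pi),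
      Complex.exp (Complex.I * (((m : ℝ) * θ + z * Real.cos θ : ℝ) : ℂ))‖
      ≤ 60 / Real.sqrt z := by
  have hπ : (3 : ℝ) < Real.pi := Real.pi_gt_three
  have hz1 : (1 : ℝ) ≤ z := by linarith
  have hz0 : (0 : ℝ) < z := by linarith
  have hsz : (1 : ℝ) ≤ Real.sqrt z := by
    rw [show (1:ℝ) = Real.sqrt 1 from (Real.sqrt_one).symm]
    exact Real.sqrt_le_sqrt hz1
  have hsz0 : (0 : ℝ) < Real.sqrt z := by linarith
  have h3 : (1.7 : ℝ) ≤ Real.sqrt 3 := by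
    nlinarith [Real.sq_sqrt (by norm_num : (0:ℝ) ≤ 3), Real.sqrt_nonneg 3]
  set f : ℝ → ℝ := fun θ => (m : ℝ) * θ + z * Real.cos θ with hfdef
  set f' : ℝ → ℝ := fun θ => (m : ℝ) - z * Real.sin θ with hf'def
  set f'' : ℝ → ℝ := fun θ => -(z * Real.cos θ) with hf''def
  have hf : ∀ θ, HasDerivAt f (f' θ) θ := by
    intro θ
    have := ((hasDerivAt_id θ).const_mul (m : ℝ)).add ((Real.hasDerivAt_cos θ).const_mul z)
    refine this.congr_deriv ?_
    simp only [hf'def]; ring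
  have hf' : ∀ θ, HasDerivAt f' (f'' θ) θ := by
    intro θ
    have := ((Real.hasDerivAt_sin θ).const_mul z).const_sub (m : ℝ)
    convert this using 1
  have hcont : Continuous f'' := (continuous_const.mul Real.continuous_cos).neg
  have hcf : Continuous f := by
    rw [continuous_iff_continuousAt]; exact fun θ => (hf θ).continuousAt
  have hce : Continuous fun θ : ℝ => Complex.exp (Complex.I * (f θ : ℂ)) :=
    Complex.continuous_exp.comp (continuous_const.mul (Complex.continuous_ofReal.comp hcf))
  have II : ∀ u v : ℝ,
      IntervalIntegrable (fun θ => Complex.exp (Complex.I * (f θ : ℂ))) volume u v :=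
    fun u v => hce.intervalIntegrable u v
  have habs : ∀ u c : ℝ, |u| ≤ c → c ≤ Real.pi → Real.cos c ≤ Real.cos u := by
    intro u c h1 h2
    rw [← Real.cos_abs u]
    exact Real.cos_le_cos_of_nonneg_of_le_pi (abs_nonneg u) h2 h1
  -- lower bound for sin on [π/3, 2π/3]
  have hsin : ∀ θ : ℝ, Real.pi / 3 ≤ θ → θ ≤ 2 * Real.pi / 3 → Real.sqrt 3 / 2 ≤ Real.sin θ := by
    intro θ h1 h2
    have : Real.cos (Real.pi / 6) ≤ Real.cos (θ - Real.pi / 2) := by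
      apply habs
      · rw [abs_le]; constructor <;> linarith
      · linarith
    rwa [Real.cos_pi_div_six, Real.cos_sub_pi_div_two] at this
  -- the seven pieces
  have p1 : ‖∫ θ in (0:ℝ)..(Real.pi/3), Complex.exp (Complex.I * (f θ : ℂ))‖
      ≤ 8 / Real.sqrt (z/2) := by
    apply vdc2_neg (by linarith) (by linarith) hf hf' hcont
    intro θ hθ
    have hc : (1:ℝ)/2 ≤ Real.cos θ := by
      have := habs θ (Real.pi/3) (by rw [abs_of_nonneg hθ.1]; exact hθ.2) (by linarith)
      rwa [Real.cos_pi_div_three] at this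
    simp only [hf''def]
    nlinarith
  have p2 : ‖∫ θ in (Real.pi/3)..(Real.pi/2), Complex.exp (Complex.I * (f θ : ℂ))‖
      ≤ 3 / (z/2) := by
    apply vdc1 (by linarith) (by linarith) hf hf' hcont
    · right
      intro θ hθ
      have hs := hsin θ hθ.1 (by linarith [hθ.2])
      have hm' : |(m:ℝ)| ≤ z / 4 := by linarith
      have h5 := le_abs_self (m:ℝ)
      simp only [hf'def]
      nlinarith [mul_le_mul_of_nonneg_left hs hz0.le]
    · right
      intro θ hθ
      have hc : 0 ≤ Real.cos θ :=
        Real.cos_nonneg_of_mem_Icc ⟨by linarith [hθ.1], hθ.2⟩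
      simp only [hf''def]
      nlinarith
  have p3 : ‖∫ θ in (Real.pi/2)..(2*Real.pi/3), Complex.exp (Complex.I * (f θ : ℂ))‖
      ≤ 3 / (z/2) := by
    apply vdc1 (by linarith) (by linarith) hf hf' hcont
    · right
      intro θ hθ
      have hs := hsin θ (by linarith [hθ.1]) hθ.2
      have hm' : |(m:ℝ)| ≤ z / 4 := by linarith
      have h5 := le_abs_self (m:ℝ)
      simp only [hf'def]
      nlinarith [mul_le_mul_of_nonneg_left hs hz0.le]
    · left
      intro θ hθ
      have hc : Real.cos θ ≤ 0 :=
        Real.cos_nonpos_of_pi_div_two_le_of_le hθ.1 (by linarith [hθ.2])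
      simp only [hf''def]
      nlinarith
  have p4 : ‖∫ θ in (2*Real.pi/3)..(4*Real.pi/3), Complex.exp (Complex.I * (f θ : ℂ))‖
      ≤ 8 / Real.sqrt (z/2) := by
    apply vdc2 (by linarith) (by linarith) hf hf' hcont
    intro θ hθ
    have hc : Real.cos θ ≤ -(1/2) := by
      have : Real.cos (Real.pi/3) ≤ Real.cos (θ - Real.pi) := by
        apply habs
        · rw [abs_le]; constructor <;> linarith [hθ.1, hθ.2]
        · linarith
      rw [Real.cos_pi_div_three, Real.cos_sub_pi] at this
      linarith
    simp only [hf''def]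
    nlinarith
  have p5 : ‖∫ θ in (4*Real.pi/3)..(3*Real.pi/2), Complex.exp (Complex.I * (f θ : ℂ))‖
      ≤ 3 / (z/2) := by
    apply vdc1 (by linarith) (by linarith) hf hf' hcont
    · left
      intro θ hθ
      have hs : Real.sin θ ≤ -(Real.sqrt 3 / 2) := by
        have := hsin (θ - Real.pi) (by linarith [hθ.1]) (by linarith [hθ.2])
        rw [Real.sin_sub_pi] at this
        linarith
      have hm' : |(m:ℝ)| ≤ z / 4 := by linarith
      have h5 := neg_abs_le (m:ℝ)
      simp only [hf'def]
      nlinarith [mul_le_mul_of_nonneg_left hs hz0.le]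
    · left
      intro θ hθ
      have hc : Real.cos θ ≤ 0 :=
        Real.cos_nonpos_of_pi_div_two_le_of_le (by linarith [hθ.1]) (by linarith [hθ.2])
      simp only [hf''def]
      nlinarith
  have p6 : ‖∫ θ in (3*Real.pi/2)..(5*Real.pi/3), Complex.exp (Complex.I * (f θ : ℂ))‖
      ≤ 3 / (z/2) := by
    apply vdc1 (by linarith) (by linarith) hf hf' hcont
    · left
      intro θ hθ
      have hs : Real.sin θ ≤ -(Real.sqrt 3 / 2) := by
        have := hsin (θ - Real.pi) (by linarith [hθ.1]) (by linarith [hθ.2])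
        rw [Real.sin_sub_pi] at this
        linarith
      have hm' : |(m:ℝ)| ≤ z / 4 := by linarith
      have h5 := neg_abs_le (m:ℝ)
      simp only [hf'def]
      nlinarith [mul_le_mul_of_nonneg_left hs hz0.le]
    · right
      intro θ hθ
      have hc : 0 ≤ Real.cos θ := by
        have : 0 ≤ Real.cos (θ - 2*Real.pi) :=
          Real.cos_nonneg_of_mem_Icc ⟨by linarith [hθ.1], by linarith [hθ.2]⟩
        rwa [Real.cos_sub_two_pi] at this
      simp only [hf''def]
      nlinarith
  have p7 : ‖∫ θ in (5*Real.pi/3)..(2*Real.pi), Complex.exp (Complex.I * (f θ : ℂ))‖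
      ≤ 8 / Real.sqrt (z/2) := by
    apply vdc2_neg (by linarith) (by linarith) hf hf' hcont
    intro θ hθ
    have hc : (1:ℝ)/2 ≤ Real.cos θ := by
      have : Real.cos (Real.pi/3) ≤ Real.cos (θ - 2*Real.pi) := by
        apply habs
        · rw [abs_le]; constructor <;> linarith [hθ.1, hθ.2]
        · linarith
      rw [Real.cos_pi_div_three, Real.cos_sub_two_pi] at this
      linarith
    simp only [hf''def]
    nlinarith
  -- combine
  have hb2 : 8 / Real.sqrt (z/2) ≤ 12 / Real.sqrt z := by
    have hs2 : Real.sqrt (z/2) = Real.sqrt z / Real.sqrt 2 := Real.sqrt_div hz0.le 2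
    rw [hs2, div_div_eq_mul_div]
    gcongr
    nlinarith [Real.sq_sqrt (by norm_num : (0:ℝ) ≤ 2), Real.sqrt_nonneg 2]
  have hb1 : 3 / (z/2) ≤ 6 / Real.sqrt z := by
    rw [div_le_div_iff₀ (by linarith) hsz0]
    have : Real.sqrt z * Real.sqrt z = z := Real.mul_self_sqrt hz0.le
    nlinarith
  have tri : ∀ A B C D E F G : ℂ, ‖A+B+C+D+E+F+G‖ ≤ ‖A‖+‖B‖+‖C‖+‖D‖+‖E‖+‖F‖+‖G‖ := by
    intro A B C D E F G
    have h1 := norm_add_le (A+B+C+D+E+F) G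
    have h2 := norm_add_le (A+B+C+D+E) F
    have h3 := norm_add_le (A+B+C+D) E
    have h4 := norm_add_le (A+B+C) D
    have h5 := norm_add_le (A+B) C
    have h6 := norm_add_le A B
    linarith
  have split : (∫ θ in (0:ℝ)..(2*Real.pi), Complex.exp (Complex.I * (f θ : ℂ)))
      = (∫ θ in (0:ℝ)..(Real.pi/3), Complex.exp (Complex.I * (f θ : ℂ)))
      + (∫ θ in (Real.pi/3)..(Real.pi/2), Complex.exp (Complex.I * (f θ : ℂ)))
      + (∫ θ in (Real.pi/2)..(2*Real.pi/3), Complex.exp (Complex.I * (f θ : ℂ)))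
      + (∫ θ in (2*Real.pi/3)..(4*Real.pi/3), Complex.exp (Complex.I * (f θ : ℂ)))
      + (∫ θ in (4*Real.pi/3)..(3*Real.pi/2), Complex.exp (Complex.I * (f θ : ℂ)))
      + (∫ θ in (3*Real.pi/2)..(5*Real.pi/3), Complex.exp (Complex.I * (f θ : ℂ)))
      + (∫ θ in (5*Real.pi/3)..(2*Real.pi), Complex.exp (Complex.I * (f θ : ℂ))) := by
    rw [integral_add_adjacent_intervals (II 0 (Real.pi/3)) (II (Real.pi/3) (Real.pi/2)),
      integral_add_adjacent_intervals (II 0 (Real.pi/2)) (II (Real.pi/2) (2*Real.pi/3)),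
      integral_add_adjacent_intervals (II 0 (2*Real.pi/3)) (II (2*Real.pi/3) (4*Real.pi/3)),
      integral_add_adjacent_intervals (II 0 (4*Real.pi/3)) (II (4*Real.pi/3) (3*Real.pi/2)),
      integral_add_adjacent_intervals (II 0 (3*Real.pi/2)) (II (3*Real.pi/2) (5*Real.pi/3)),
      integral_add_adjacent_intervals (II 0 (5*Real.pi/3)) (II (5*Real.pi/3) (2*Real.pi))]
  rw [split]
  refine (tri _ _ _ _ _ _ _).trans ?_
  have q1 := p1.trans hb2
  have q2 := p2.trans hb1
  have q3 := p3.trans hb1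
  have q4 := p4.trans hb2
  have q5 := p5.trans hb1
  have q6 := p6.trans hb1
  have q7 := p7.trans hb2
  have hfin : (12:ℝ)/Real.sqrt z + 6/Real.sqrt z + 6/Real.sqrt z + 12/Real.sqrt z
      + 6/Real.sqrt z + 6/Real.sqrt z + 12/Real.sqrt z = 60/Real.sqrt z := by ring
  linarith [q1, q2, q3, q4, q5, q6, q7]

lemma orth_exp (n : ℤ) (hn : n ≠ 0) :
    ∫ θ in (0:ℝ)..(2 * Real.pi), Complex.exp (((n : ℂ) * Complex.I) * θ) = 0 := by
  have hc : (n : ℂ) * Complex.I ≠ 0 :=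
    mul_ne_zero (Int.cast_ne_zero.mpr hn) Complex.I_ne_zero
  rw [integral_exp_mul_complex hc]
  have h1 : Complex.exp ((n : ℂ) * Complex.I * ((2 * Real.pi : ℝ) : ℂ)) = 1 := by
    rw [show (n : ℂ) * Complex.I * ((2 * Real.pi : ℝ) : ℂ)
        = (n : ℂ) * (2 * (Real.pi : ℂ) * Complex.I) by push_cast; ring]
    exact Complex.exp_int_mul_two_pi_mul_I n
  rw [h1]
  simp

lemma orth_cos (m : ℤ) (k : ℕ) (hk : k < m.natAbs) :
    ∫ θ in (0:ℝ)..(2 * Real.pi),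
      Complex.exp (Complex.I * (m : ℂ) * θ) * ((Real.cos θ : ℂ)) ^ k = 0 := by
  have heq : Set.EqOn
      (fun θ : ℝ => Complex.exp (Complex.I * (m : ℂ) * θ) * ((Real.cos θ : ℂ)) ^ k)
      (fun θ : ℝ => ∑ j ∈ Finset.range (k + 1),
        ((k.choose j : ℂ) / 2 ^ k) *
          Complex.exp ((((m + 2 * j - k : ℤ) : ℂ) * Complex.I) * θ))
      (Set.uIcc 0 (2 * Real.pi)) := by
    intro θ _
    simp only
    rw [show ((Real.cos θ : ℂ)) = Complex.cos (θ : ℂ) by rw [Complex.ofReal_cos]]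
    simp only [Complex.cos]
    rw [div_pow, add_pow, Finset.sum_div, Finset.mul_sum]
    apply Finset.sum_congr rfl
    intro j hj
    have hjk : j ≤ k := Finset.mem_range_succ_iff.mp hj
    rw [← Complex.exp_nat_mul, ← Complex.exp_nat_mul, ← Complex.exp_add]
    have hexp : Complex.exp (Complex.I * (m : ℂ) * θ) *
        Complex.exp ((j : ℂ) * ((θ:ℂ) * Complex.I) + ((k - j : ℕ) : ℂ) * (-(θ:ℂ) * Complex.I))
        = Complex.exp ((((m + 2 * j - k : ℤ) : ℂ) * Complex.I) * θ) := by
      rw [← Complex.exp_add]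
      congr 1
      push_cast [Nat.cast_sub hjk]
      ring
    rw [← hexp]
    ring
  rw [intervalIntegral.integral_congr heq, intervalIntegral.integral_finset_sum]
  · apply Finset.sum_eq_zero
    intro j hj
    have hjk : j ≤ k := Finset.mem_range_succ_iff.mp hj
    rw [intervalIntegral.integral_const_mul]
    have hn : (m + 2 * (j : ℤ) - k) ≠ 0 := by omega
    rw [orth_exp _ hn, mul_zero]
  · intro j _
    apply Continuous.intervalIntegrable
    exact continuous_const.mul (Complex.continuous_exp.comp
      (continuous_const.mul Complex.continuous_ofReal))

lemma bint_small (m : ℤ) (z : ℝ) (hz0 : 0 ≤ z) (hz1 : z ≤ 1 / 2) :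
    ‖∫ θ in (0:ℝ)..(2 * Real.pi),
      Complex.exp (Complex.I * (((m : ℝ) * θ + z * Real.cos θ : ℝ) : ℂ))‖
      ≤ 4 * Real.pi * z ^ m.natAbs := by
  have hπ : (0 : ℝ) < Real.pi := Real.pi_pos
  set N := m.natAbs with hN
  set P : ℝ → ℂ := fun θ =>
    ∑ k ∈ Finset.range N, (Complex.I * (z * Real.cos θ : ℝ)) ^ k / (k.factorial : ℂ)
    with hP
  have hsplit : ∀ θ : ℝ, Complex.exp (Complex.I * (((m : ℝ) * θ + z * Real.cos θ : ℝ) : ℂ))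
      = Complex.exp (Complex.I * (m : ℂ) * θ) *
        Complex.exp (Complex.I * ((z * Real.cos θ : ℝ) : ℂ)) := by
    intro θ
    rw [← Complex.exp_add]
    congr 1
    push_cast
    ring
  have hcontP : Continuous P := by
    apply continuous_finset_sum
    intro k _
    apply Continuous.div_const
    apply Continuous.pow
    exact continuous_const.mul
      (Complex.continuous_ofReal.comp (continuous_const.mul Real.continuous_cos))
  have hconte : Continuous fun θ : ℝ => Complex.exp (Complex.I * (m : ℂ) * θ) :=
    Complex.continuous_exp.comp (continuous_const.mul Complex.continuous_ofReal)
  have hcontE : Continuous fun θ : ℝ => Complex.exp (Complex.I * ((z * Real.cos θ : ℝ) : ℂ)) :=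
    Complex.continuous_exp.comp (continuous_const.mul
      (Complex.continuous_ofReal.comp (continuous_const.mul Real.continuous_cos)))
  have hzero : ∫ θ in (0:ℝ)..(2 * Real.pi),
      Complex.exp (Complex.I * (m : ℂ) * θ) * P θ = 0 := by
    have heq : Set.EqOn (fun θ : ℝ => Complex.exp (Complex.I * (m : ℂ) * θ) * P θ)
        (fun θ : ℝ => ∑ k ∈ Finset.range N, ((Complex.I * z) ^ k / (k.factorial : ℂ)) *
          (Complex.exp (Complex.I * (m : ℂ) * θ) * ((Real.cos θ : ℂ)) ^ k))
        (Set.uIcc 0 (2 * Real.pi)) := by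
      intro θ _
      simp only [hP]
      rw [Finset.mul_sum]
      apply Finset.sum_congr rfl
      intro k _
      rw [show (Complex.I * ((z * Real.cos θ : ℝ) : ℂ)) ^ k
          = (Complex.I * z) ^ k * ((Real.cos θ : ℂ)) ^ k from by
        rw [← mul_pow]; congr 1; push_cast; ring]
      ring
    rw [intervalIntegral.integral_congr heq, intervalIntegral.integral_finset_sum]
    · apply Finset.sum_eq_zero
      intro k hkr
      rw [intervalIntegral.integral_const_mul, orth_cos m k (Finset.mem_range.mp hkr), mul_zero]
    · intro k _
      apply Continuous.intervalIntegrable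
      exact continuous_const.mul (hconte.mul (Continuous.pow
        (Complex.continuous_ofReal.comp Real.continuous_cos) k))
  have hkey : (∫ θ in (0:ℝ)..(2 * Real.pi),
      Complex.exp (Complex.I * (((m : ℝ) * θ + z * Real.cos θ : ℝ) : ℂ)))
      = ∫ θ in (0:ℝ)..(2 * Real.pi), Complex.exp (Complex.I * (m : ℂ) * θ) *
          (Complex.exp (Complex.I * ((z * Real.cos θ : ℝ) : ℂ)) - P θ) := by
    rw [intervalIntegral.integral_congr
      (fun θ _ => hsplit θ : Set.EqOn _ _ (Set.uIcc 0 (2 * Real.pi)))]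
    have h1 : IntervalIntegrable (fun θ : ℝ => Complex.exp (Complex.I * (m : ℂ) * θ) *
        Complex.exp (Complex.I * ((z * Real.cos θ : ℝ) : ℂ))) volume 0 (2 * Real.pi) :=
      (hconte.mul hcontE).intervalIntegrable _ _
    have h2 : IntervalIntegrable (fun θ : ℝ => Complex.exp (Complex.I * (m : ℂ) * θ) * P θ)
        volume 0 (2 * Real.pi) := (hconte.mul hcontP).intervalIntegrable _ _
    have : (fun θ : ℝ => Complex.exp (Complex.I * (m : ℂ) * θ) *
        (Complex.exp (Complex.I * ((z * Real.cos θ : ℝ) : ℂ)) - P θ))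
        = fun θ : ℝ => Complex.exp (Complex.I * (m : ℂ) * θ) *
          Complex.exp (Complex.I * ((z * Real.cos θ : ℝ) : ℂ))
          - Complex.exp (Complex.I * (m : ℂ) * θ) * P θ := by
      funext θ; ring
    rw [this, intervalIntegral.integral_sub h1 h2, hzero, sub_zero]
  rw [hkey]
  have hbound : ∀ θ ∈ Set.uIoc (0:ℝ) (2 * Real.pi),
      ‖Complex.exp (Complex.I * (m : ℂ) * θ) *
        (Complex.exp (Complex.I * ((z * Real.cos θ : ℝ) : ℂ)) - P θ)‖
      ≤ 2 * z ^ N / (N.factorial : ℝ) := by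
    intro θ _
    rw [norm_mul]
    have he1 : ‖Complex.exp (Complex.I * (m : ℂ) * θ)‖ = 1 := by
      rw [show Complex.I * (m : ℂ) * (θ : ℂ) = Complex.I * (((m : ℝ) * θ : ℝ) : ℂ) from by
        push_cast; ring]
      exact norm_exp_I_mul_real _
    rw [he1, one_mul]
    set w : ℂ := Complex.I * ((z * Real.cos θ : ℝ) : ℂ) with hw
    have habsw : ‖w‖ ≤ z := by
      rw [hw, norm_mul, Complex.norm_I, one_mul, Complex.norm_real, Real.norm_eq_abs, abs_mul]
      calc |z| * |Real.cos θ| ≤ |z| * 1 :=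
        mul_le_mul_of_nonneg_left (Real.abs_cos_le_one θ) (abs_nonneg z)
      _ = z := by rw [mul_one, abs_of_nonneg hz0]
    have hb := Complex.exp_bound' (x := w) (n := N) (by
      have h1 : ‖w‖ / (N.succ : ℝ) ≤ ‖w‖ := by
        apply div_le_self (norm_nonneg w)
        exact_mod_cast Nat.one_le_iff_ne_zero.mpr (Nat.succ_ne_zero N)
      linarith)
    refine le_trans hb ?_
    rw [div_mul_eq_mul_div, mul_comm]
    apply div_le_div_of_nonneg_right ?_ ?_ |>.trans_eq rfl
    · apply mul_le_mul_of_nonneg_left ?_ (by norm_num : (0:ℝ) ≤ 2)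
      exact pow_le_pow_left₀ (norm_nonneg w) habsw N
    · positivity
  have := intervalIntegral.norm_integral_le_of_norm_le_const hbound
  refine this.trans ?_
  have hfac : (1 : ℝ) ≤ (N.factorial : ℝ) := by exact_mod_cast N.factorial_pos
  have hzN : (0:ℝ) ≤ z ^ N := pow_nonneg hz0 N
  rw [show |2 * Real.pi - 0| = 2 * Real.pi from by rw [sub_zero, abs_of_pos (by linarith)]]
  rw [div_mul_eq_mul_div]
  rw [div_le_iff₀ (by linarith : (0:ℝ) < (N.factorial : ℝ))]
  have hx : (0:ℝ) ≤ 4 * Real.pi * z ^ N * ((N.factorial : ℝ) - 1) :=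
    mul_nonneg (mul_nonneg (by linarith) hzN) (by linarith)
  nlinarith

lemma jint_eq_bint (m : ℤ) (t : ℝ) : jint m t
    = ∫ θ in (0 : ℝ)..(2 * Real.pi),
      Complex.exp (Complex.I * (((m : ℝ) * θ + (4 * Real.pi * t) * Real.cos θ : ℝ) : ℂ)) := rfl

lemma jint_trivial (m : ℤ) (t : ℝ) : ‖jint m t‖ ≤ 2 * Real.pi := by
  have h := intervalIntegral.norm_integral_le_of_norm_le_const
    (a := 0) (b := 2 * Real.pi) (C := 1)
    (f := fun θ : ℝ => Complex.exp (Complex.I * (((m : ℝ) * θ + 4 * Real.pi * t * Real.cos θ : ℝ) : ℂ)))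
    (fun θ _ => le_of_eq (norm_exp_I_mul_real _))
  rw [jint]
  refine h.trans ?_
  rw [one_mul, sub_zero, abs_of_pos (by positivity)]

lemma jint_le_neg_half (m : ℤ) : ∃ C, 0 < C ∧ ∀ t : ℝ, 0 < t →
    ‖jint m t‖ ≤ C * t ^ (-(1/2) : ℝ) := by
  have hπ : (3 : ℝ) < Real.pi := Real.pi_gt_three
  set T : ℝ := max 1 |(m : ℝ)| with hT
  have hT1 : (1 : ℝ) ≤ T := le_max_left _ _
  have hTm : |(m : ℝ)| ≤ T := le_max_right _ _
  refine ⟨max 60 (2 * Real.pi * Real.sqrt T), lt_of_lt_of_le (by norm_num) (le_max_left _ _),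
    fun t ht => ?_⟩
  have hrp : t ^ (-(1/2) : ℝ) = (Real.sqrt t)⁻¹ := by
    rw [Real.rpow_neg ht.le, Real.sqrt_eq_rpow]
  have hst : 0 < Real.sqrt t := Real.sqrt_pos.mpr ht
  rcases le_or_gt T t with h | h
  · have ht1 : (1:ℝ) ≤ t := hT1.trans h
    have hz1 : 4 * Real.pi ≤ 4 * Real.pi * t := by nlinarith
    have hz2 : 4 * |(m:ℝ)| ≤ 4 * Real.pi * t := by nlinarith [hTm.trans h, abs_nonneg (m:ℝ)]
    have hd := bint_decay m (4 * Real.pi * t) hz1 hz2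
    rw [← jint_eq_bint] at hd
    refine hd.trans ?_
    have hsq : Real.sqrt t ≤ Real.sqrt (4 * Real.pi * t) :=
      Real.sqrt_le_sqrt (by nlinarith)
    have h60 : 60 / Real.sqrt (4 * Real.pi * t) ≤ 60 / Real.sqrt t := by
      apply div_le_div_of_nonneg_left (by norm_num) hst hsq
    refine h60.trans ?_
    rw [hrp, div_eq_mul_inv]
    apply mul_le_mul_of_nonneg_right (le_max_left _ _) (by positivity)
  · have h2 : ‖jint m t‖ ≤ 2 * Real.pi := jint_trivial m t
    refine h2.trans ?_
    rw [hrp]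
    have hsq : Real.sqrt t ≤ Real.sqrt T := Real.sqrt_le_sqrt h.le
    have hsT : 0 < Real.sqrt T := Real.sqrt_pos.mpr (by linarith)
    calc 2 * Real.pi = (2 * Real.pi * Real.sqrt t) * (Real.sqrt t)⁻¹ := by
          field_simp
      _ ≤ (2 * Real.pi * Real.sqrt T) * (Real.sqrt t)⁻¹ := by
          apply mul_le_mul_of_nonneg_right ?_ (by positivity)
          nlinarith
      _ ≤ max 60 (2 * Real.pi * Real.sqrt T) * (Real.sqrt t)⁻¹ := by
          apply mul_le_mul_of_nonneg_right (le_max_right _ _) (by positivity)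

lemma jint_le_pow (m : ℤ) : ∃ C, 0 < C ∧ ∀ t : ℝ, 0 < t →
    ‖jint m t‖ ≤ C * t ^ ((m.natAbs : ℕ) : ℝ) := by
  have hπ : (3 : ℝ) < Real.pi := Real.pi_gt_three
  set N := m.natAbs with hN
  refine ⟨6 * Real.pi * (8 * Real.pi) ^ N, by positivity, fun t ht => ?_⟩
  have hrp : t ^ ((N : ℕ) : ℝ) = t ^ N := Real.rpow_natCast t N
  rw [hrp]
  have htN : (0:ℝ) < t ^ N := pow_pos ht N
  rcases le_or_gt t (1 / (8 * Real.pi)) with h | h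
  · have hz0 : (0:ℝ) ≤ 4 * Real.pi * t := by positivity
    have h8 : t * (8 * Real.pi) ≤ 1 := (le_div_iff₀ (by positivity)).mp h
    have hz1 : 4 * Real.pi * t ≤ 1 / 2 := by nlinarith
    have hs := bint_small m (4 * Real.pi * t) hz0 hz1
    rw [← jint_eq_bint] at hs
    refine hs.trans ?_
    rw [mul_pow]
    calc 4 * Real.pi * ((4 * Real.pi) ^ N * t ^ N)
        ≤ 6 * Real.pi * ((8 * Real.pi) ^ N * t ^ N) := by
          apply mul_le_mul (by nlinarith) ?_ (by positivity) (by positivity)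
          apply mul_le_mul_of_nonneg_right ?_ htN.le
          apply pow_le_pow_left₀ (by positivity) (by nlinarith) N
      _ = 6 * Real.pi * (8 * Real.pi) ^ N * t ^ N := by ring
  · have h2 : ‖jint m t‖ ≤ 2 * Real.pi := jint_trivial m t
    refine h2.trans ?_
    have h8 : (1:ℝ) ≤ 8 * Real.pi * t := by
      rw [div_lt_iff₀ (by positivity : (0:ℝ) < 8 * Real.pi)] at h
      nlinarith
    have h9 : (1:ℝ) ≤ (8 * Real.pi * t) ^ N := by
      calc (1:ℝ) = 1 ^ N := (one_pow N).symm
      _ ≤ (8 * Real.pi * t) ^ N := pow_le_pow_left₀ (by norm_num) h8 N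
    rw [mul_pow] at h9
    nlinarith [Real.pi_pos]

lemma jint_le_rpow (m : ℤ) (a : ℝ) (ha1 : -(1/2 : ℝ) ≤ a) (ha2 : a ≤ ((m.natAbs : ℕ) : ℝ)) :
    ∃ C, 0 < C ∧ ∀ t : ℝ, 0 < t → ‖jint m t‖ ≤ C * t ^ a := by
  obtain ⟨C1, hC1, hb1⟩ := jint_le_neg_half m
  obtain ⟨C2, hC2, hb2⟩ := jint_le_pow m
  refine ⟨max C1 C2, lt_of_lt_of_le hC1 (le_max_left _ _), fun t ht => ?_⟩
  rcases le_or_gt 1 t with h | h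
  · calc ‖jint m t‖ ≤ C1 * t ^ (-(1/2) : ℝ) := hb1 t ht
    _ ≤ max C1 C2 * t ^ a := by
        apply mul_le_mul (le_max_left _ _) ?_ (Real.rpow_nonneg ht.le _)
          (le_trans hC1.le (le_max_left _ _))
        exact Real.rpow_le_rpow_of_exponent_le h ha1
  · calc ‖jint m t‖ ≤ C2 * t ^ ((m.natAbs : ℕ) : ℝ) := hb2 t ht
    _ ≤ max C1 C2 * t ^ a := by
        apply mul_le_mul (le_max_right _ _) ?_ (Real.rpow_nonneg ht.le _)
          (le_trans hC1.le (le_max_left _ _))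
        exact Real.rpow_le_rpow_of_exponent_ge ht h.le ha2

lemma G_integrable (c : ℝ) (N : ℕ) (hc1 : -1 < c + 1/2) (hc2 : c - N < -1) :
    IntegrableOn (fun y : ℝ => y ^ c * min (y ^ (1/2 : ℝ)) (y ^ (-(N:ℝ)))) (Set.Ioi (0:ℝ)) := by
  have hcont : ContinuousOn
      (fun y : ℝ => y ^ c * min (y ^ (1/2:ℝ)) (y ^ (-(N:ℝ)))) (Set.Ioi (0:ℝ)) := by
    intro y hy
    have hy0 : y ≠ 0 := ne_of_gt hy
    apply ContinuousAt.continuousWithinAt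
    exact (Real.continuousAt_rpow_const y c (Or.inl hy0)).mul
      ((Real.continuousAt_rpow_const y _ (Or.inl hy0)).min
        (Real.continuousAt_rpow_const y _ (Or.inl hy0)))
  rw [show Set.Ioi (0:ℝ) = Set.Ioc 0 1 ∪ Set.Ioi 1 from
    (Set.Ioc_union_Ioi_eq_Ioi zero_le_one).symm]
  apply IntegrableOn.union
  · rw [integrableOn_Ioc_iff_integrableOn_Ioo]
    apply Integrable.mono' (g := fun y : ℝ => y ^ (c + 1/2))
    · exact ((integrableOn_Ioo_rpow_iff one_pos).mpr hc1)
    · exact (hcont.mono (fun y hy => hy.1 : Set.Ioo (0:ℝ) 1 ⊆ Set.Ioi 0)).aestronglyMeasurable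
        measurableSet_Ioo
    · filter_upwards [ae_restrict_mem measurableSet_Ioo] with y hy
      have hy0 : 0 < y := hy.1
      rw [Real.norm_eq_abs, abs_of_nonneg (mul_nonneg (Real.rpow_nonneg hy0.le _)
        (le_min (Real.rpow_nonneg hy0.le _) (Real.rpow_nonneg hy0.le _)))]
      rw [Real.rpow_add hy0]
      exact mul_le_mul_of_nonneg_left (min_le_left _ _) (Real.rpow_nonneg hy0.le _)
  · apply Integrable.mono' (g := fun y : ℝ => y ^ (c - N))
    · exact ((integrableOn_Ioi_rpow_iff one_pos).mpr hc2)
    · exact (hcont.mono (fun y hy => Set.mem_Ioi.mpr (lt_trans one_pos (Set.mem_Ioi.mp hy)) : Set.Ioi (1:ℝ) ⊆ Set.Ioi 0)).aestronglyMeasurable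
        measurableSet_Ioi
    · filter_upwards [ae_restrict_mem measurableSet_Ioi] with y hy
      have hy0 : (0:ℝ) < y := lt_trans one_pos hy
      rw [Real.norm_eq_abs, abs_of_nonneg (mul_nonneg (Real.rpow_nonneg hy0.le _)
        (le_min (Real.rpow_nonneg hy0.le _) (Real.rpow_nonneg hy0.le _)))]
      rw [show c - (N:ℝ) = c + -(N:ℝ) by ring, Real.rpow_add hy0]
      exact mul_le_mul_of_nonneg_left (min_le_right _ _) (Real.rpow_nonneg hy0.le _)

lemma jint_continuous (m : ℤ) : Continuous (jint m) := by
  apply continuous_parametric_intervalIntegral_of_continuous' (μ := volume)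
    (f := fun (t : ℝ) (θ : ℝ) =>
      Complex.exp (Complex.I * (((m : ℝ) * θ + 4 * Real.pi * t * Real.cos θ : ℝ) : ℂ)))
  apply Complex.continuous_exp.comp
  apply continuous_const.mul
  apply Complex.continuous_ofReal.comp
  apply Continuous.add
  · exact continuous_const.mul continuous_snd
  · exact (continuous_const.mul continuous_fst).mul (Real.continuous_cos.comp continuous_snd)

lemma min_mul_bound {A B u v : ℝ} (hA : 0 ≤ A) (hB : 0 ≤ B) (hu : 0 ≤ u) (hv : 0 ≤ v) :
    min (A * u) (B * v) ≤ max A B * min u v := by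
  rw [mul_min_of_nonneg _ _ (le_trans hA (le_max_left A B))]
  apply le_min
  · exact (min_le_left _ _).trans (mul_le_mul_of_nonneg_right (le_max_left _ _) hu)
  · exact (min_le_right _ _).trans (mul_le_mul_of_nonneg_right (le_max_right _ _) hv)


set_option maxHeartbeats 1000000 in
/-- Absolute convergence of the integral `j_{ν,m}(x)` representing a complex
Bessel kernel of rank `d+1`: if there is `a ∈ [-1/2, |m_{d+1}|]` with
`-(1/2+a)/2 < Re ν_l < (|m_l|-a)/2` for all `l`, then
`y ↦ j_{m_{d+1}}(x·y_1⋯y_d)·∏_l y_l^{2ν_l-1}·j_{m_l}(x/y_l)` is Lebesgue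
integrable on `(0,∞)^d`. -/
theorem stmt_18 (d : ℕ) (hd : 1 ≤ d) (m : Fin (d + 1) → ℤ) (x : ℝ) (hx : 0 < x)
    (ν : Fin d → ℂ)
    (ha : ∃ a : ℝ, -(1 / 2) ≤ a ∧ a ≤ |(m (Fin.last d) : ℝ)| ∧
      ∀ l : Fin d, -(1 / 2 + a) / 2 < (ν l).re ∧ (ν l).re < (|(m l.castSucc : ℝ)| - a) / 2) :
    IntegrableOn (fun y : Fin d → ℝ =>
        jint (m (Fin.last d)) (x * ∏ l, y l) *
          ∏ l, (y l : ℂ) ^ (2 * ν l - 1) * jint (m l.castSucc) (x / y l))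
      (Set.pi Set.univ fun _ => Set.Ioi (0 : ℝ)) := by
  obtain ⟨a, ha1, ha2, ha3⟩ := ha
  have habs : ∀ k : ℤ, |(k : ℝ)| = ((k.natAbs : ℕ) : ℝ) := by
    intro k
    rw [Nat.cast_natAbs]
    exact Int.cast_abs.symm
  obtain ⟨C0, hC0, hC0b⟩ := jint_le_rpow (m (Fin.last d)) a ha1 (by rw [← habs]; exact ha2)
  have hex : ∀ l : Fin d, ∃ C, 0 < C ∧
      (∀ t : ℝ, 0 < t → ‖jint (m l.castSucc) t‖ ≤ C * t ^ (-(1/2) : ℝ)) ∧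
      (∀ t : ℝ, 0 < t → ‖jint (m l.castSucc) t‖
        ≤ C * t ^ (((m l.castSucc).natAbs : ℕ) : ℝ)) := by
    intro l
    obtain ⟨C1, h1, hb1⟩ := jint_le_neg_half (m l.castSucc)
    obtain ⟨C2, h2, hb2⟩ := jint_le_pow (m l.castSucc)
    exact ⟨max C1 C2, lt_of_lt_of_le h1 (le_max_left _ _),
      fun t ht => (hb1 t ht).trans
        (mul_le_mul_of_nonneg_right (le_max_left _ _) (Real.rpow_nonneg ht.le _)),
      fun t ht => (hb2 t ht).trans
        (mul_le_mul_of_nonneg_right (le_max_right _ _) (Real.rpow_nonneg ht.le _))⟩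
  choose C hCpos hCn hCp using hex
  set N : Fin d → ℕ := fun l => (m l.castSucc).natAbs with hNdef
  set K : Fin d → ℝ := fun l => C l * max (x ^ (-(1/2):ℝ)) (x ^ ((N l : ℕ) : ℝ)) with hKdef
  have hKpos : ∀ l, 0 < K l := fun l => mul_pos (hCpos l)
    (lt_of_lt_of_le (Real.rpow_pos_of_pos hx _) (le_max_left _ _))
  set G : Fin d → ℝ → ℝ := fun l y =>
    y ^ (a + (2 * (ν l).re - 1)) * min (y ^ (1/2:ℝ)) (y ^ (-(N l : ℝ))) with hGdef
  have hGint : ∀ l, IntegrableOn (G l) (Set.Ioi (0:ℝ)) := by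
    intro l
    apply G_integrable
    · have := (ha3 l).1
      linarith
    · have h2 := (ha3 l).2
      rw [habs] at h2
      have : ((N l : ℕ) : ℝ) = (((m l.castSucc).natAbs : ℕ) : ℝ) := by rw [hNdef]
      rw [this]
      linarith
  have hSmeas : MeasurableSet (Set.pi Set.univ fun _ : Fin d => Set.Ioi (0 : ℝ)) :=
    MeasurableSet.univ_pi fun _ => measurableSet_Ioi
  set Ctot : ℝ := C0 * x ^ a * ∏ l, K l with hCtot
  have hH : Integrable (fun y : Fin d → ℝ =>
      Ctot * ∏ l, (Set.Ioi (0:ℝ)).indicator (G l) (y l)) := by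
    apply Integrable.const_mul
    exact Integrable.fintype_prod (𝕜 := ℝ)
      (f := fun l => (Set.Ioi (0:ℝ)).indicator (G l))
      (fun l => (integrable_indicator_iff measurableSet_Ioi).mpr (hGint l))
  -- continuity of the integrand on the domain
  have hScont : ContinuousOn (fun y : Fin d → ℝ =>
      jint (m (Fin.last d)) (x * ∏ l, y l) *
        ∏ l, (y l : ℂ) ^ (2 * ν l - 1) * jint (m l.castSucc) (x / y l))
      (Set.pi Set.univ fun _ => Set.Ioi (0 : ℝ)) := by
    apply ContinuousOn.mul
    · apply Continuous.continuousOn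
      exact (jint_continuous _).comp
        (continuous_const.mul (continuous_finset_prod Finset.univ fun l _ => continuous_apply l))
    · apply continuousOn_finset_prod
      intro l _
      apply ContinuousOn.mul
      · intro y hy
        have hyl : 0 < y l := (Set.mem_univ_pi.mp hy) l
        apply ContinuousAt.continuousWithinAt
        have hbase : ContinuousAt (fun y : Fin d → ℝ => ((y l : ℝ) : ℂ)) y :=
          (Complex.continuous_ofReal.comp (continuous_apply l)).continuousAt
        exact hbase.cpow continuousAt_const
          (Or.inl (by simpa using hyl))
      · apply ContinuousOn.comp (jint_continuous (m l.castSucc)).continuousOn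
          ?_ (Set.mapsTo_univ _ _)
        exact continuousOn_const.div (continuous_apply l).continuousOn
          (fun y hy => ne_of_gt ((Set.mem_univ_pi.mp hy) l))
  apply Integrable.mono' hH.integrableOn (hScont.aestronglyMeasurable hSmeas)
  filter_upwards [ae_restrict_mem hSmeas] with y hy
  have hyl : ∀ l, 0 < y l := fun l => (Set.mem_univ_pi.mp hy) l
  have hprod : 0 < ∏ l, y l := Finset.prod_pos fun l _ => hyl l
  have h1 : ‖jint (m (Fin.last d)) (x * ∏ l, y l)‖ ≤ C0 * (x ^ a * ∏ l, (y l) ^ a) := by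
    have h := hC0b _ (mul_pos hx hprod)
    rwa [Real.mul_rpow hx.le hprod.le,
      ← Real.finset_prod_rpow Finset.univ _ (fun l _ => (hyl l).le) a] at h
  have h2 : ∀ l, ‖(y l : ℂ) ^ (2 * ν l - 1)‖ = (y l) ^ (2 * (ν l).re - 1) := by
    intro l
    rw [Complex.norm_cpow_eq_rpow_re_of_pos (hyl l)]
    congr 1
    simp [Complex.sub_re, Complex.mul_re]
  have h3 : ∀ l, ‖jint (m l.castSucc) (x / y l)‖
      ≤ K l * min ((y l) ^ (1/2:ℝ)) ((y l) ^ (-(N l : ℝ))) := by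
    intro l
    have hxy : 0 < x / y l := div_pos hx (hyl l)
    have e1 : (x / y l) ^ (-(1/2):ℝ) = x ^ (-(1/2):ℝ) * (y l) ^ ((1/2):ℝ) := by
      rw [Real.div_rpow hx.le (hyl l).le, Real.rpow_neg (hyl l).le, div_inv_eq_mul]
    have e2 : (x / y l) ^ ((N l : ℕ) : ℝ) = x ^ ((N l : ℕ):ℝ) * (y l) ^ (-(N l : ℝ)) := by
      rw [Real.div_rpow hx.le (hyl l).le, Real.rpow_neg (hyl l).le, div_eq_mul_inv]
    have hmin : min (C l * (x / y l) ^ (-(1/2):ℝ)) (C l * (x / y l) ^ ((N l : ℕ) : ℝ))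
        ≤ K l * min ((y l) ^ (1/2:ℝ)) ((y l) ^ (-(N l : ℝ))) := by
      rw [e1, e2, ← mul_assoc, ← mul_assoc]
      have hb := min_mul_bound (A := C l * x ^ (-(1/2):ℝ)) (B := C l * x ^ ((N l : ℕ):ℝ))
        (u := (y l) ^ ((1/2):ℝ)) (v := (y l) ^ (-(N l : ℝ)))
        (mul_nonneg (hCpos l).le (Real.rpow_nonneg hx.le _))
        (mul_nonneg (hCpos l).le (Real.rpow_nonneg hx.le _))
        (Real.rpow_nonneg (hyl l).le _)
        (Real.rpow_nonneg (hyl l).le _)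
      rwa [← mul_max_of_nonneg _ _ (hCpos l).le] at hb
    exact le_trans (le_min (hCn l _ hxy) (hCp l _ hxy)) hmin
  rw [norm_mul, norm_prod]
  calc ‖jint (m (Fin.last d)) (x * ∏ l, y l)‖ *
        ∏ l, ‖(y l : ℂ) ^ (2 * ν l - 1) * jint (m l.castSucc) (x / y l)‖
      ≤ (C0 * (x ^ a * ∏ l, (y l) ^ a)) *
        ∏ l, ((y l) ^ (2 * (ν l).re - 1) *
          (K l * min ((y l) ^ (1/2:ℝ)) ((y l) ^ (-(N l : ℝ))))) := by
        apply mul_le_mul h1 ?_ (Finset.prod_nonneg fun l _ => norm_nonneg _)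
          (mul_nonneg hC0.le (mul_nonneg (Real.rpow_nonneg hx.le _)
            (Finset.prod_nonneg fun l _ => Real.rpow_nonneg (hyl l).le _)))
        apply Finset.prod_le_prod (fun l _ => norm_nonneg _)
        intro l _
        rw [norm_mul, h2 l]
        exact mul_le_mul_of_nonneg_left (h3 l) (Real.rpow_nonneg (hyl l).le _)
    _ = Ctot * ∏ l, (Set.Ioi (0:ℝ)).indicator (G l) (y l) := by
        have hind : ∏ l, (Set.Ioi (0:ℝ)).indicator (G l) (y l) = ∏ l, G l (y l) :=
          Finset.prod_congr rfl fun l _ => Set.indicator_of_mem (hyl l) (G l)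
        have A1 : ∏ l, ((y l) ^ (2 * (ν l).re - 1) *
            (K l * min ((y l) ^ (1/2:ℝ)) ((y l) ^ (-(N l : ℝ)))))
            = (∏ l, K l) * ∏ l, ((y l) ^ (2 * (ν l).re - 1) *
              min ((y l) ^ (1/2:ℝ)) ((y l) ^ (-(N l : ℝ)))) := by
          rw [← Finset.prod_mul_distrib]
          exact Finset.prod_congr rfl fun l _ => by ring
        have A2 : (∏ l, (y l) ^ a) * ∏ l, ((y l) ^ (2 * (ν l).re - 1) *
            min ((y l) ^ (1/2:ℝ)) ((y l) ^ (-(N l : ℝ)))) = ∏ l, G l (y l) := by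
          rw [← Finset.prod_mul_distrib]
          refine Finset.prod_congr rfl fun l _ => ?_
          rw [hGdef]
          simp only
          rw [← mul_assoc, ← Real.rpow_add (hyl l)]
        rw [hind, A1, ← A2, hCtot]
        ring
end
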